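/- arXiv:1502.04615 — 4 statements merged into one kernel-verified Lean document; each statement's English description precedes it below -/
import Mathlib

section
/- Let G = M_27 = ⟨a, b | a⁹ = b³ = e, b⁻¹ab = a⁴⟩ and set Z₀ = {e}, Z₁ = {a³b, a⁶b²}, Z₂ = {a, a³, a⁶, a⁸, a⁴b², a⁷b, a⁸b, a⁸b²}, Z₃ = G \ (Z₀ ∪ Z₁ ∪ Z₂). Then {Z₀, Z₁, Z₂, Z₃} is a partition of G with Z_i = Z_i⁻¹ for all i, and the ℤ-span 𝒜 of the elements ξ_i = Z̲_i (i = 0,…,3) in ℤG is closed under multiplication and commutative; hence 𝒜 is a commutative S-ring over G with basic sets Z₀, Z₁, Z₂, Z₃. -/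
open scoped Pointwise

/-- For `X ⊆ G`, the element `X̲ = Σ_{x ∈ X} x` of the integral group ring `ℤG`. -/
noncomputable def grpSum (G : Type*) [Group G] (X : Set G) : MonoidAlgebra ℤ G :=
  ∑ᶠ x ∈ X, MonoidAlgebra.of ℤ G x

/-- The ℤ-span of the sums `X̲` over `X ∈ 𝒮` in the group ring `ℤG`. -/
noncomputable def sRingSpan (G : Type*) [Group G] (S : Set (Set G)) :
    Submodule ℤ (MonoidAlgebra ℤ G) :=
  Submodule.span ℤ (grpSum G '' S)

/-- `S` is the set of basic sets of an S-ring over `G`: `S` is a partition of `G`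
containing `{1}`, closed under inversion, and its ℤ-span is closed under multiplication. -/
structure IsSRing (G : Type*) [Group G] [Finite G] (S : Set (Set G)) : Prop where
  nonempty : ∀ X ∈ S, X.Nonempty
  covers : ∀ g : G, ∃! X, X ∈ S ∧ g ∈ X
  one_mem : ({1} : Set G) ∈ S
  inv_mem : ∀ X ∈ S, X⁻¹ ∈ S
  mul_mem : ∀ X ∈ S, ∀ Y ∈ S, grpSum G X * grpSum G Y ∈ sRingSpan G S

/-- The subgroup `G_right` of `Sym(G)` consisting of the right translations `x ↦ x * g`. -/
def rightShifts (G : Type*) [Group G] : Subgroup (Equiv.Perm G) where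
  carrier := {σ | ∃ g : G, σ = Equiv.mulRight g}
  one_mem' := ⟨1, Equiv.ext fun x => by simp⟩
  mul_mem' := by
    rintro σ τ ⟨g, rfl⟩ ⟨h, rfl⟩
    exact ⟨h * g, Equiv.ext fun x => by simp [Equiv.Perm.mul_apply, mul_assoc]⟩
  inv_mem' := by
    rintro σ ⟨g, rfl⟩
    exact ⟨g⁻¹, by simp [Equiv.Perm.inv_def]⟩

/-- The orbits of the stabilizer `Γ_e` of the identity in `Γ`, as subsets of `G`. -/
def stabOrbits {G : Type*} [Group G] (Γ : Subgroup (Equiv.Perm G)) : Set (Set G) :=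
  {X | ∃ g : G, X = {h | ∃ σ ∈ Γ, σ 1 = 1 ∧ σ g = h}}

/-- An S-ring (given by its partition `S` of basic sets) is schurian if its span equals
`𝒜(Γ,G)` for some `Γ` with `G_right ≤ Γ ≤ Sym(G)`. -/
def IsSchurian (G : Type*) [Group G] (S : Set (Set G)) : Prop :=
  ∃ Γ : Subgroup (Equiv.Perm G), rightShifts G ≤ Γ ∧
    sRingSpan G S = sRingSpan G (stabOrbits Γ)

/-- The automorphism group `Aut(𝒜)` of the S-ring with basic sets `S`: bijections of `G`
fixing `1` and preserving each basic relation `R(X) = {(g, xg) : g ∈ G, x ∈ X}`. -/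
def srAut {G : Type*} [Group G] (S : Set (Set G)) : Subgroup (Equiv.Perm G) where
  carrier := {f | f 1 = 1 ∧ ∀ X ∈ S, ∀ g h : G, (h * g⁻¹ ∈ X ↔ f h * (f g)⁻¹ ∈ X)}
  one_mem' := ⟨rfl, fun X _ g h => by simp⟩
  mul_mem' := by
    rintro f₁ f₂ ⟨e₁, p₁⟩ ⟨e₂, p₂⟩
    refine ⟨by simp [Equiv.Perm.mul_apply, e₂, e₁], fun X hX g h => ?_⟩
    simpa [Equiv.Perm.mul_apply] using (p₂ X hX g h).trans (p₁ X hX (f₂ g) (f₂ h))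
  inv_mem' := by
    rintro f ⟨e₁, p₁⟩
    refine ⟨by rw [Equiv.Perm.inv_def, Equiv.symm_apply_eq, e₁], fun X hX g h => ?_⟩
    simpa using (p₁ X hX (f⁻¹ g) (f⁻¹ h)).symm

/-- The set of orbits of a subgroup `Δ ≤ Sym(G)` on `G`. -/
def permOrbits {G : Type*} [Group G] (Δ : Subgroup (Equiv.Perm G)) : Set (Set G) :=
  {X | ∃ g : G, X = {h | ∃ σ ∈ Δ, σ g = h}}

/-- `P` is a block system for `Γ ≤ Sym(G)` acting on `G`. -/
def IsBlockSystem {G : Type*} [Group G] (Γ : Subgroup (Equiv.Perm G))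
    (P : Set (Set G)) : Prop :=
  (∀ g : G, ∃! B, B ∈ P ∧ g ∈ B) ∧ (∀ σ ∈ Γ, ∀ B ∈ P, σ '' B ∈ P)

/-- The partition of `G` into the cosets `{Hg : g ∈ G}` of a subset `H ⊆ G`. -/
def cosetsOf {G : Type*} [Group G] (H : Set G) : Set (Set G) :=
  {B | ∃ g : G, B = {x | ∃ u ∈ H, x = u * g}}

/-- The partition of `G` into singletons. -/
def singletonPartition (G : Type*) : Set (Set G) := {B | ∃ g : G, B = {g}}


set_option maxHeartbeats 1000000

/-! ### Auxiliary: the concrete model of `M₂₇` -/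

/-- Concrete model of `M₂₇` on `ZMod 9 × ZMod 3`. -/
def M27H : Type := ZMod 9 × ZMod 3

namespace M27H

instance : Fintype M27H := inferInstanceAs (Fintype (ZMod 9 × ZMod 3))
instance : DecidableEq M27H := inferInstanceAs (DecidableEq (ZMod 9 × ZMod 3))
instance : One M27H := ⟨((0 : ZMod 9), (0 : ZMod 3))⟩
instance : Mul M27H := ⟨fun x y => (x.1 + 7 ^ x.2.val * y.1, x.2 + y.2)⟩
instance : Inv M27H := ⟨fun x => (-(4 ^ x.2.val * x.1), -x.2)⟩
set_option maxHeartbeats 4000000 in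
instance : Group M27H := Group.ofLeftAxioms (by decide) (by decide) (by decide)

lemma mul_def (x y : M27H) : x * y = (x.1 + 7 ^ x.2.val * y.1, x.2 + y.2) := rfl

/-- Elements of the model from natural-number exponents. -/
def el (n m : ℕ) : M27H := ((n : ZMod 9), (m : ZMod 3))

def w0 : Finset M27H := {el 0 0}
def w1 : Finset M27H := {el 3 1, el 6 2}
def w2 : Finset M27H := {el 1 0, el 3 0, el 6 0, el 8 0, el 4 2, el 7 1, el 8 1, el 8 2}
def w3 : Finset M27H := (w0 ∪ w1 ∪ w2)ᶜ

end M27H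

section Expand

variable {H : Type*} [Group H] [Fintype H] [DecidableEq H]

lemma M27_mul_expand (s t : Finset H) :
    (∑ x ∈ s, MonoidAlgebra.of ℤ H x) * (∑ y ∈ t, MonoidAlgebra.of ℤ H y)
    = ∑ h : H, ((((s ×ˢ t).filter (fun p => p.1 * p.2 = h)).card : ℤ))
        • MonoidAlgebra.of ℤ H h := by
  rw [Finset.sum_mul_sum]
  have : ∀ h : H, (((s ×ˢ t).filter (fun p => p.1 * p.2 = h)).card : ℤ) • MonoidAlgebra.of ℤ H h
      = ∑ p ∈ (s ×ˢ t).filter (fun p => p.1 * p.2 = h), MonoidAlgebra.of ℤ H (p.1 * p.2) := by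
    intro h
    rw [Finset.sum_congr rfl (fun p hp => by
      rw [(Finset.mem_filter.mp hp).2])]
    rw [Finset.sum_const, Nat.cast_smul_eq_nsmul]
  simp_rw [this]
  rw [Finset.sum_fiberwise (s ×ˢ t) (fun p => p.1 * p.2) (fun p => MonoidAlgebra.of ℤ H (p.1 * p.2))]
  rw [Finset.sum_product]
  simp [← map_mul]

lemma M27_sum_indicator (s : Finset H) :
    ∑ x ∈ s, MonoidAlgebra.of ℤ H x
      = ∑ h : H, (if h ∈ s then (1:ℤ) else 0) • MonoidAlgebra.of ℤ H h := by
  simp only [ite_smul, one_smul, zero_smul, Finset.sum_ite_mem, Finset.univ_inter]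

lemma M27_combo (s t v0 v1 v2 v3 : Finset H) (c0 c1 c2 c3 : ℤ)
    (hc : ∀ h : H, (((s ×ˢ t).filter (fun p => p.1 * p.2 = h)).card : ℤ)
      = c0 * (if h ∈ v0 then 1 else 0) + c1 * (if h ∈ v1 then 1 else 0)
      + c2 * (if h ∈ v2 then 1 else 0) + c3 * (if h ∈ v3 then 1 else 0)) :
    (∑ x ∈ s, MonoidAlgebra.of ℤ H x) * (∑ y ∈ t, MonoidAlgebra.of ℤ H y)
      = c0 • (∑ x ∈ v0, MonoidAlgebra.of ℤ H x) + c1 • (∑ x ∈ v1, MonoidAlgebra.of ℤ H x)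
      + c2 • (∑ x ∈ v2, MonoidAlgebra.of ℤ H x) + c3 • (∑ x ∈ v3, MonoidAlgebra.of ℤ H x) := by
  rw [M27_mul_expand, M27_sum_indicator v0, M27_sum_indicator v1, M27_sum_indicator v2,
    M27_sum_indicator v3,
    Finset.smul_sum, Finset.smul_sum, Finset.smul_sum, Finset.smul_sum,
    ← Finset.sum_add_distrib, ← Finset.sum_add_distrib, ← Finset.sum_add_distrib]
  refine Finset.sum_congr rfl fun h _ => ?_
  rw [hc h]
  simp [add_smul, mul_smul]

end Expand

section HomPart

variable {G : Type*} [Group G] (a b : G)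
  (ha : a ^ 9 = 1) (hb3 : b ^ 3 = 1) (hab : b⁻¹ * a * b = a ^ 4)

lemma M27_conj_pow (x y : G) (n : ℕ) : (x⁻¹ * y * x) ^ n = x⁻¹ * y ^ n * x := by
  induction n with
  | zero => simp
  | succ n ih => rw [pow_succ, pow_succ, ih]; group

include ha hab in
lemma M27_hba : b * a = a ^ 7 * b := by
  have h1 : b⁻¹ * a ^ 7 * b = a := by
    rw [← M27_conj_pow, hab, ← pow_mul, pow_eq_pow_mod (4 * 7) ha]
    norm_num
  calc b * a = b * (b⁻¹ * a ^ 7 * b) := by rw [h1]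
  _ = a ^ 7 * b := by group

include ha hab in
lemma M27_hbpow : ∀ k : ℕ, b * a ^ k = a ^ (7 * k) * b := by
  intro k
  induction k with
  | zero => simp
  | succ k ih =>
    rw [pow_succ, ← mul_assoc, ih, mul_assoc, M27_hba a b ha hab, Nat.mul_succ, pow_add]
    group

include ha hab in
lemma M27_hbj : ∀ j k : ℕ, b ^ j * a ^ k = a ^ (7 ^ j * k) * b ^ j := by
  intro j
  induction j with
  | zero => simp
  | succ j ih =>
    intro k
    rw [pow_succ, mul_assoc, M27_hbpow a b ha hab k, ← mul_assoc, ih, mul_assoc,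
      ← pow_succ, ← mul_assoc]
    ring_nf

include ha in
lemma M27_apow_cast (n : ℕ) : a ^ ((n : ZMod 9)).val = a ^ n := by
  rw [ZMod.val_natCast, ← pow_eq_pow_mod n ha]

include hb3 in
lemma M27_bpow_cast (n : ℕ) : b ^ ((n : ZMod 3)).val = b ^ n := by
  rw [ZMod.val_natCast, ← pow_eq_pow_mod n hb3]

include ha hb3 hab in
lemma M27_fmul : ∀ x y : M27H, a ^ (x * y).1.val * b ^ (x * y).2.val
    = (a ^ x.1.val * b ^ x.2.val) * (a ^ y.1.val * b ^ y.2.val) := by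
  intro x y
  have h1 : (x.1 + 7 ^ x.2.val * y.1 : ZMod 9)
      = ((x.1.val + 7 ^ x.2.val * y.1.val : ℕ) : ZMod 9) := by
    push_cast [ZMod.natCast_val, ZMod.cast_id]
    rfl
  have h2 : (x.2 + y.2 : ZMod 3) = ((x.2.val + y.2.val : ℕ) : ZMod 3) := by
    push_cast [ZMod.natCast_val, ZMod.cast_id]
    rfl
  show a ^ (x.1 + 7 ^ x.2.val * y.1 : ZMod 9).val * b ^ (x.2 + y.2 : ZMod 3).val = _
  rw [h1, h2, M27_apow_cast a ha, M27_bpow_cast b hb3]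
  conv_rhs => rw [mul_assoc, ← mul_assoc (b ^ x.2.val), M27_hbj a b ha hab]
  simp [mul_assoc, pow_add]

/-- The homomorphism from the model onto `G`. -/
noncomputable def M27f : M27H →* G :=
  MonoidHom.mk' (fun x => a ^ x.1.val * b ^ x.2.val) (fun x y => M27_fmul a b ha hb3 hab x y)

include ha hb3 hab in
lemma M27f_el (n m : ℕ) : M27f a b ha hb3 hab (M27H.el n m) = a ^ n * b ^ m := by
  show a ^ ((n : ZMod 9)).val * b ^ ((m : ZMod 3)).val = _
  rw [M27_apow_cast a ha, M27_bpow_cast b hb3]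

end HomPart

lemma M27_span_comm {A : Type*} [Ring A] {s : Set A}
    (h : ∀ x ∈ s, ∀ y ∈ s, x * y = y * x) :
    ∀ x ∈ Submodule.span ℤ s, ∀ y ∈ Submodule.span ℤ s, x * y = y * x := by
  have step1 : ∀ y ∈ s, ∀ x ∈ Submodule.span ℤ s, x * y = y * x := by
    intro y hy x hx
    have hle : Submodule.span ℤ s
        ≤ LinearMap.ker (LinearMap.mulRight ℤ y - LinearMap.mulLeft ℤ y) := by
      rw [Submodule.span_le]
      intro z hz
      simp only [SetLike.mem_coe, LinearMap.mem_ker, LinearMap.sub_apply,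
        LinearMap.mulRight_apply, LinearMap.mulLeft_apply, sub_eq_zero]
      exact h z hz y hy
    have := hle hx
    rw [LinearMap.mem_ker, LinearMap.sub_apply, LinearMap.mulRight_apply,
      LinearMap.mulLeft_apply, sub_eq_zero] at this
    exact this
  intro x hx y hy
  have hle : Submodule.span ℤ s
      ≤ LinearMap.ker (LinearMap.mulLeft ℤ x - LinearMap.mulRight ℤ x) := by
    rw [Submodule.span_le]
    intro z hz
    simp only [SetLike.mem_coe, LinearMap.mem_ker, LinearMap.sub_apply,
      LinearMap.mulRight_apply, LinearMap.mulLeft_apply, sub_eq_zero]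
    exact step1 z hz x hx
  have := hle hy
  rw [LinearMap.mem_ker, LinearMap.sub_apply, LinearMap.mulRight_apply,
    LinearMap.mulLeft_apply, sub_eq_zero] at this
  exact this

/-- The partition `{Z₀, Z₁, Z₂, Z₃}` of `M₂₇` is inversion-closed and spans a
commutative S-ring. -/
theorem M27_sring
    {G : Type*} [Group G] [Finite G] (a b : G)
    (hcard : Nat.card G = 27) (ha : a ^ 9 = 1) (hb3 : b ^ 3 = 1)
    (hab : b⁻¹ * a * b = a ^ 4) (hgen : Subgroup.closure {a, b} = ⊤)
    (Z0 Z1 Z2 Z3 : Set G) (S : Set (Set G))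
    (hZ0 : Z0 = {1}) (hZ1 : Z1 = {a ^ 3 * b, a ^ 6 * b ^ 2})
    (hZ2 : Z2 = {a, a ^ 3, a ^ 6, a ^ 8, a ^ 4 * b ^ 2, a ^ 7 * b, a ^ 8 * b, a ^ 8 * b ^ 2})
    (hZ3 : Z3 = Set.univ \ (Z0 ∪ Z1 ∪ Z2))
    (hS : S = {Z0, Z1, Z2, Z3}) :
    IsSRing G S ∧ (∀ X ∈ S, X⁻¹ = X) ∧
      (∀ x ∈ sRingSpan G S, ∀ y ∈ sRingSpan G S, x * y = y * x) := by
  cases nonempty_fintype G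
  set f := M27f a b ha hb3 hab with hf
  have hfa : f (M27H.el 1 0) = a := by
    rw [hf, M27f_el a b ha hb3 hab, pow_one, pow_zero, mul_one]
  have hfb : f (M27H.el 0 1) = b := by
    rw [hf, M27f_el a b ha hb3 hab, pow_one, pow_zero, one_mul]
  have hsurj : Function.Surjective f := by
    rw [← MonoidHom.range_eq_top, ← top_le_iff, ← hgen, Subgroup.closure_le]
    intro x hx
    simp only [Set.mem_insert_iff, Set.mem_singleton_iff] at hx
    rcases hx with rfl | rfl
    · exact ⟨M27H.el 1 0, hfa⟩
    · exact ⟨M27H.el 0 1, hfb⟩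
  have hbij : Function.Bijective f := by
    rw [Fintype.bijective_iff_surjective_and_card]
    refine ⟨hsurj, ?_⟩
    have h1 : Fintype.card M27H = 27 := by
      show Fintype.card (ZMod 9 × ZMod 3) = 27
      simp
    rw [h1, ← Nat.card_eq_fintype_card, hcard]
  have hinj := hbij.1
  have hZ0e : Z0 = ⇑f '' ↑M27H.w0 := by
    rw [hZ0, show ((M27H.w0 : Set M27H)) = {M27H.el 0 0} from by simp [M27H.w0],
      Set.image_singleton, M27f_el a b ha hb3 hab]
    simp
  have hZ1e : Z1 = ⇑f '' ↑M27H.w1 := by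
    rw [hZ1, show ((M27H.w1 : Set M27H)) = {M27H.el 3 1, M27H.el 6 2} from by simp [M27H.w1],
      Set.image_insert_eq, Set.image_singleton, M27f_el a b ha hb3 hab,
      M27f_el a b ha hb3 hab, pow_one]
  have hZ2e : Z2 = ⇑f '' ↑M27H.w2 := by
    rw [hZ2, show ((M27H.w2 : Set M27H)) = {M27H.el 1 0, M27H.el 3 0, M27H.el 6 0, M27H.el 8 0,
        M27H.el 4 2, M27H.el 7 1, M27H.el 8 1, M27H.el 8 2} from by simp [M27H.w2]]
    simp only [Set.image_insert_eq, Set.image_singleton, hf, M27f_el a b ha hb3 hab,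
      pow_zero, pow_one, mul_one]
  have hZ3e : Z3 = ⇑f '' ↑M27H.w3 := by
    rw [hZ3, hZ0e, hZ1e, hZ2e, ← Set.image_union, ← Set.image_union,
      ← Finset.coe_union, ← Finset.coe_union,
      show ((M27H.w3 : Set M27H)) = (↑(M27H.w0 ∪ M27H.w1 ∪ M27H.w2) : Set M27H)ᶜ from by
        rw [show M27H.w3 = (M27H.w0 ∪ M27H.w1 ∪ M27H.w2)ᶜ from rfl, Finset.coe_compl],
      Set.image_compl_eq hbij, Set.compl_eq_univ_diff]
  have s0 : Z0 ∈ S := by rw [hS]; exact Set.mem_insert _ _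
  have s1 : Z1 ∈ S := by
    rw [hS]; exact Set.mem_insert_of_mem _ (Set.mem_insert _ _)
  have s2 : Z2 ∈ S := by
    rw [hS]
    exact Set.mem_insert_of_mem _ (Set.mem_insert_of_mem _ (Set.mem_insert _ _))
  have s3 : Z3 ∈ S := by
    rw [hS]
    exact Set.mem_insert_of_mem _ (Set.mem_insert_of_mem _ (Set.mem_insert_of_mem _ rfl))
  have hSmem : ∀ X ∈ S, X = Z0 ∨ X = Z1 ∨ X = Z2 ∨ X = Z3 := by
    intro X hX
    rw [hS] at hX
    simpa [Set.mem_insert_iff] using hX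
  set Φ := MonoidAlgebra.mapDomainRingHom ℤ f with hΦ
  have hΦof : ∀ x : M27H, Φ (MonoidAlgebra.of ℤ M27H x) = MonoidAlgebra.of ℤ G (f x) := by
    intro x
    show MonoidAlgebra.mapDomain f (MonoidAlgebra.of ℤ M27H x) = MonoidAlgebra.of ℤ G (f x)
    rw [MonoidAlgebra.of_apply, MonoidAlgebra.of_apply, MonoidAlgebra.mapDomain_single]
  have hgsW : ∀ W : Finset M27H,
      grpSum G (⇑f '' ↑W) = Φ (∑ x ∈ W, MonoidAlgebra.of ℤ M27H x) := by
    intro W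
    rw [grpSum, finsum_mem_image hinj.injOn, finsum_mem_coe_finset, map_sum]
    exact Finset.sum_congr rfl fun x _ => (hΦof x).symm
  have hprod : ∀ (s t : Finset M27H) (c0 c1 c2 c3 : ℤ),
      (∀ h : M27H, (((s ×ˢ t).filter (fun p => p.1 * p.2 = h)).card : ℤ)
        = c0 * (if h ∈ M27H.w0 then 1 else 0) + c1 * (if h ∈ M27H.w1 then 1 else 0)
        + c2 * (if h ∈ M27H.w2 then 1 else 0) + c3 * (if h ∈ M27H.w3 then 1 else 0)) →
      grpSum G (⇑f '' ↑s) * grpSum G (⇑f '' ↑t)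
        = c0 • grpSum G Z0 + c1 • grpSum G Z1 + c2 • grpSum G Z2 + c3 • grpSum G Z3 := by
    intro s t c0 c1 c2 c3 hc
    rw [hZ0e, hZ1e, hZ2e, hZ3e, hgsW, hgsW, hgsW, hgsW, hgsW, hgsW, ← map_mul,
      M27_combo s t _ _ _ _ c0 c1 c2 c3 hc]
    simp only [map_add, map_zsmul]
  have q00 : grpSum G Z0 * grpSum G Z0 = (1:ℤ) • grpSum G Z0 + (0:ℤ) • grpSum G Z1
      + (0:ℤ) • grpSum G Z2 + (0:ℤ) • grpSum G Z3 := by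
    conv_lhs => rw [hZ0e]
    exact hprod M27H.w0 M27H.w0 1 0 0 0 (by decide)
  have q01 : grpSum G Z0 * grpSum G Z1 = (0:ℤ) • grpSum G Z0 + (1:ℤ) • grpSum G Z1
      + (0:ℤ) • grpSum G Z2 + (0:ℤ) • grpSum G Z3 := by
    conv_lhs => rw [hZ0e, hZ1e]
    exact hprod M27H.w0 M27H.w1 0 1 0 0 (by decide)
  have q02 : grpSum G Z0 * grpSum G Z2 = (0:ℤ) • grpSum G Z0 + (0:ℤ) • grpSum G Z1
      + (1:ℤ) • grpSum G Z2 + (0:ℤ) • grpSum G Z3 := by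
    conv_lhs => rw [hZ0e, hZ2e]
    exact hprod M27H.w0 M27H.w2 0 0 1 0 (by decide)
  have q03 : grpSum G Z0 * grpSum G Z3 = (0:ℤ) • grpSum G Z0 + (0:ℤ) • grpSum G Z1
      + (0:ℤ) • grpSum G Z2 + (1:ℤ) • grpSum G Z3 := by
    conv_lhs => rw [hZ0e, hZ3e]
    exact hprod M27H.w0 M27H.w3 0 0 0 1 (by decide)
  have q10 : grpSum G Z1 * grpSum G Z0 = (0:ℤ) • grpSum G Z0 + (1:ℤ) • grpSum G Z1
      + (0:ℤ) • grpSum G Z2 + (0:ℤ) • grpSum G Z3 := by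
    conv_lhs => rw [hZ0e, hZ1e]
    exact hprod M27H.w1 M27H.w0 0 1 0 0 (by decide)
  have q11 : grpSum G Z1 * grpSum G Z1 = (2:ℤ) • grpSum G Z0 + (1:ℤ) • grpSum G Z1
      + (0:ℤ) • grpSum G Z2 + (0:ℤ) • grpSum G Z3 := by
    conv_lhs => rw [hZ1e]
    exact hprod M27H.w1 M27H.w1 2 1 0 0 (by decide)
  have q12 : grpSum G Z1 * grpSum G Z2 = (0:ℤ) • grpSum G Z0 + (0:ℤ) • grpSum G Z1
      + (0:ℤ) • grpSum G Z2 + (1:ℤ) • grpSum G Z3 := by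
    conv_lhs => rw [hZ1e, hZ2e]
    exact hprod M27H.w1 M27H.w2 0 0 0 1 (by decide)
  have q13 : grpSum G Z1 * grpSum G Z3 = (0:ℤ) • grpSum G Z0 + (0:ℤ) • grpSum G Z1
      + (2:ℤ) • grpSum G Z2 + (1:ℤ) • grpSum G Z3 := by
    conv_lhs => rw [hZ1e, hZ3e]
    exact hprod M27H.w1 M27H.w3 0 0 2 1 (by decide)
  have q20 : grpSum G Z2 * grpSum G Z0 = (0:ℤ) • grpSum G Z0 + (0:ℤ) • grpSum G Z1
      + (1:ℤ) • grpSum G Z2 + (0:ℤ) • grpSum G Z3 := by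
    conv_lhs => rw [hZ0e, hZ2e]
    exact hprod M27H.w2 M27H.w0 0 0 1 0 (by decide)
  have q21 : grpSum G Z2 * grpSum G Z1 = (0:ℤ) • grpSum G Z0 + (0:ℤ) • grpSum G Z1
      + (0:ℤ) • grpSum G Z2 + (1:ℤ) • grpSum G Z3 := by
    conv_lhs => rw [hZ1e, hZ2e]
    exact hprod M27H.w2 M27H.w1 0 0 0 1 (by decide)
  have q22 : grpSum G Z2 * grpSum G Z2 = (8:ℤ) • grpSum G Z0 + (0:ℤ) • grpSum G Z1
      + (1:ℤ) • grpSum G Z2 + (3:ℤ) • grpSum G Z3 := by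
    conv_lhs => rw [hZ2e]
    exact hprod M27H.w2 M27H.w2 8 0 1 3 (by decide)
  have q23 : grpSum G Z2 * grpSum G Z3 = (0:ℤ) • grpSum G Z0 + (8:ℤ) • grpSum G Z1
      + (6:ℤ) • grpSum G Z2 + (4:ℤ) • grpSum G Z3 := by
    conv_lhs => rw [hZ2e, hZ3e]
    exact hprod M27H.w2 M27H.w3 0 8 6 4 (by decide)
  have q30 : grpSum G Z3 * grpSum G Z0 = (0:ℤ) • grpSum G Z0 + (0:ℤ) • grpSum G Z1
      + (0:ℤ) • grpSum G Z2 + (1:ℤ) • grpSum G Z3 := by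
    conv_lhs => rw [hZ0e, hZ3e]
    exact hprod M27H.w3 M27H.w0 0 0 0 1 (by decide)
  have q31 : grpSum G Z3 * grpSum G Z1 = (0:ℤ) • grpSum G Z0 + (0:ℤ) • grpSum G Z1
      + (2:ℤ) • grpSum G Z2 + (1:ℤ) • grpSum G Z3 := by
    conv_lhs => rw [hZ1e, hZ3e]
    exact hprod M27H.w3 M27H.w1 0 0 2 1 (by decide)
  have q32 : grpSum G Z3 * grpSum G Z2 = (0:ℤ) • grpSum G Z0 + (8:ℤ) • grpSum G Z1
      + (6:ℤ) • grpSum G Z2 + (4:ℤ) • grpSum G Z3 := by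
    conv_lhs => rw [hZ2e, hZ3e]
    exact hprod M27H.w3 M27H.w2 0 8 6 4 (by decide)
  have q33 : grpSum G Z3 * grpSum G Z3 = (16:ℤ) • grpSum G Z0 + (8:ℤ) • grpSum G Z1
      + (8:ℤ) • grpSum G Z2 + (10:ℤ) • grpSum G Z3 := by
    conv_lhs => rw [hZ3e]
    exact hprod M27H.w3 M27H.w3 16 8 8 10 (by decide)
  have m0 : grpSum G Z0 ∈ sRingSpan G S := Submodule.subset_span (Set.mem_image_of_mem _ s0)
  have m1 : grpSum G Z1 ∈ sRingSpan G S := Submodule.subset_span (Set.mem_image_of_mem _ s1)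
  have m2 : grpSum G Z2 ∈ sRingSpan G S := Submodule.subset_span (Set.mem_image_of_mem _ s2)
  have m3 : grpSum G Z3 ∈ sRingSpan G S := Submodule.subset_span (Set.mem_image_of_mem _ s3)
  have hin : ∀ c0 c1 c2 c3 : ℤ, c0 • grpSum G Z0 + c1 • grpSum G Z1 + c2 • grpSum G Z2
      + c3 • grpSum G Z3 ∈ sRingSpan G S :=
    fun c0 c1 c2 c3 => Submodule.add_mem _ (Submodule.add_mem _ (Submodule.add_mem _
      (Submodule.smul_mem _ _ m0) (Submodule.smul_mem _ _ m1)) (Submodule.smul_mem _ _ m2))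
      (Submodule.smul_mem _ _ m3)
  have hd : ∀ (W W' : Finset M27H) (Z Z' : Set G), Z = ⇑f '' ↑W → Z' = ⇑f '' ↑W' →
      Disjoint W W' → Disjoint Z Z' := by
    intro W W' Z Z' h1 h2 hdd
    rw [h1, h2, Set.disjoint_image_iff hinj]
    exact Finset.disjoint_coe.mpr hdd
  have d01 := hd _ _ _ _ hZ0e hZ1e (by decide)
  have d02 := hd _ _ _ _ hZ0e hZ2e (by decide)
  have d03 := hd _ _ _ _ hZ0e hZ3e (by decide)
  have d12 := hd _ _ _ _ hZ1e hZ2e (by decide)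
  have d13 := hd _ _ _ _ hZ1e hZ3e (by decide)
  have d23 := hd _ _ _ _ hZ2e hZ3e (by decide)
  have hpair : ∀ X ∈ S, ∀ Y ∈ S, X = Y ∨ Disjoint X Y := by
    intro X hX Y hY
    rcases hSmem X hX with rfl | rfl | rfl | rfl <;>
      rcases hSmem Y hY with rfl | rfl | rfl | rfl <;>
      first
        | exact Or.inl rfl
        | exact Or.inr d01 | exact Or.inr d01.symm
        | exact Or.inr d02 | exact Or.inr d02.symm
        | exact Or.inr d03 | exact Or.inr d03.symm
        | exact Or.inr d12 | exact Or.inr d12.symm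
        | exact Or.inr d13 | exact Or.inr d13.symm
        | exact Or.inr d23 | exact Or.inr d23.symm
  have hmemiff : ∀ (W : Finset M27H) (Z : Set G), Z = ⇑f '' ↑W →
      ∀ k : M27H, (f k ∈ Z ↔ k ∈ W) := by
    intro W Z hZe k
    rw [hZe, hinj.mem_set_image, Finset.mem_coe]
  have hcov : ∀ k : M27H, k ∈ M27H.w0 ∨ k ∈ M27H.w1 ∨ k ∈ M27H.w2 ∨ k ∈ M27H.w3 := by decide
  have covers : ∀ g : G, ∃! X, X ∈ S ∧ g ∈ X := by
    intro g
    obtain ⟨k, rfl⟩ := hsurj g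
    have main : ∀ (W : Finset M27H) (Z : Set G), Z = ⇑f '' ↑W → Z ∈ S → k ∈ W →
        ∃! X, X ∈ S ∧ f k ∈ X := by
      intro W Z hZe hZS hk
      refine ⟨Z, ⟨hZS, (hmemiff W Z hZe k).mpr hk⟩, ?_⟩
      rintro X ⟨hXS, hXk⟩
      rcases hpair X hXS Z hZS with h | h
      · exact h
      · exact (Set.disjoint_left.mp h hXk ((hmemiff W Z hZe k).mpr hk)).elim
    rcases hcov k with hk | hk | hk | hk
    · exact main M27H.w0 Z0 hZ0e s0 hk
    · exact main M27H.w1 Z1 hZ1e s1 hk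
    · exact main M27H.w2 Z2 hZ2e s2 hk
    · exact main M27H.w3 Z3 hZ3e s3 hk
  have hne : ∀ X ∈ S, X.Nonempty := by
    intro X hX
    rcases hSmem X hX with rfl | rfl | rfl | rfl
    · rw [hZ0e]; exact (Finset.coe_nonempty.mpr (by decide)).image _
    · rw [hZ1e]; exact (Finset.coe_nonempty.mpr (by decide)).image _
    · rw [hZ2e]; exact (Finset.coe_nonempty.mpr (by decide)).image _
    · rw [hZ3e]; exact (Finset.coe_nonempty.mpr (by decide)).image _
  have hZinv : ∀ (W : Finset M27H) (Z : Set G), Z = ⇑f '' ↑W →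
      (∀ k : M27H, k⁻¹ ∈ W ↔ k ∈ W) → Z⁻¹ = Z := by
    intro W Z hZe hW
    ext y
    obtain ⟨k, rfl⟩ := hsurj y
    rw [Set.mem_inv, ← map_inv, hmemiff W Z hZe k⁻¹, hmemiff W Z hZe k]
    exact hW k
  have i0 := hZinv M27H.w0 Z0 hZ0e (by decide)
  have i1 := hZinv M27H.w1 Z1 hZ1e (by decide)
  have i2 := hZinv M27H.w2 Z2 hZ2e (by decide)
  have i3 := hZinv M27H.w3 Z3 hZ3e (by decide)
  have invS : ∀ X ∈ S, X⁻¹ = X := by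
    intro X hX
    rcases hSmem X hX with rfl | rfl | rfl | rfl
    · exact i0
    · exact i1
    · exact i2
    · exact i3
  have hmulmem : ∀ X ∈ S, ∀ Y ∈ S, grpSum G X * grpSum G Y ∈ sRingSpan G S := by
    intro X hX Y hY
    rcases hSmem X hX with rfl | rfl | rfl | rfl <;>
      rcases hSmem Y hY with rfl | rfl | rfl | rfl
    · rw [q00]; exact hin _ _ _ _
    · rw [q01]; exact hin _ _ _ _
    · rw [q02]; exact hin _ _ _ _
    · rw [q03]; exact hin _ _ _ _
    · rw [q10]; exact hin _ _ _ _
    · rw [q11]; exact hin _ _ _ _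
    · rw [q12]; exact hin _ _ _ _
    · rw [q13]; exact hin _ _ _ _
    · rw [q20]; exact hin _ _ _ _
    · rw [q21]; exact hin _ _ _ _
    · rw [q22]; exact hin _ _ _ _
    · rw [q23]; exact hin _ _ _ _
    · rw [q30]; exact hin _ _ _ _
    · rw [q31]; exact hin _ _ _ _
    · rw [q32]; exact hin _ _ _ _
    · rw [q33]; exact hin _ _ _ _
  have hq : ∀ X ∈ S, ∀ Y ∈ S, grpSum G X * grpSum G Y = grpSum G Y * grpSum G X := by
    intro X hX Y hY
    rcases hSmem X hX with rfl | rfl | rfl | rfl <;>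
      rcases hSmem Y hY with rfl | rfl | rfl | rfl <;>
      first
        | rfl
        | rw [q01, q10] | rw [q02, q20] | rw [q03, q30]
        | rw [q12, q21] | rw [q13, q31] | rw [q23, q32]
  have hcomm : ∀ x ∈ sRingSpan G S, ∀ y ∈ sRingSpan G S, x * y = y * x := by
    have hgen' : ∀ u ∈ grpSum G '' S, ∀ v ∈ grpSum G '' S, u * v = v * u := by
      rintro u ⟨X, hX, rfl⟩ v ⟨Y, hY, rfl⟩
      exact hq X hX Y hY
    intro x hx y hy
    exact M27_span_comm hgen' x hx y hy
  refine ⟨⟨hne, covers, ?_, ?_, hmulmem⟩, invS, hcomm⟩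
  · rw [← hZ0]; exact s0
  · intro X hX
    rw [invS X hX]
    exact hX
end

section
/- Let G = M_27 = ⟨a, b | a⁹ = b³ = e, b⁻¹ab = a⁴⟩ and let 𝒜 be the S-ring over G whose basic sets are Z₀ = {e}, Z₁ = {a³b, a⁶b²}, Z₂ = {a, a³, a⁶, a⁸, a⁴b², a⁷b, a⁸b, a⁸b²}, and Z₃ = G \ (Z₀ ∪ Z₁ ∪ Z₂). Then 𝒜 is not schurian. -/
open scoped Pointwise

/-! ### Auxiliary material for the proof -/

namespace M27Aux

/-! #### Generic facts about spans of partitions -/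

section Spans

open scoped Classical

variable {G : Type*} [Group G] [Finite G]

lemma grpSum_apply (X : Set G) (y : G) :
    (grpSum G X).coeff y = if y ∈ X then 1 else 0 := by
  rw [grpSum, finsum_mem_eq_finite_toFinset_sum _ X.toFinite]
  rw [MonoidAlgebra.coeff_sum, Finsupp.finset_sum_apply]
  simp only [MonoidAlgebra.of_apply, MonoidAlgebra.coeff_single, Finsupp.single_apply]
  simp [Finset.sum_ite_eq', Set.Finite.mem_toFinset]

lemma eval_eq_of_mem_span {Q : Set (Set G)}
    (hQ : ∀ g : G, ∃! X, X ∈ Q ∧ g ∈ X) {y y' : G} {Y0 : Set G}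
    (hY0 : Y0 ∈ Q) (hy : y ∈ Y0) (hy' : y' ∈ Y0)
    {w : MonoidAlgebra ℤ G} (hw : w ∈ sRingSpan G Q) : w.coeff y = w.coeff y' := by
  have hker : sRingSpan G Q ≤
      LinearMap.ker ((Finsupp.lapply y - Finsupp.lapply y' :
        (G →₀ ℤ) →ₗ[ℤ] ℤ) ∘ₗ (MonoidAlgebra.coeffLinearEquiv ℤ).toLinearMap) := by
    rw [sRingSpan, Submodule.span_le]
    rintro _ ⟨Y, hY, rfl⟩
    simp only [SetLike.mem_coe, LinearMap.mem_ker, LinearMap.sub_apply,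
      Finsupp.lapply_apply]
    have hmem : y ∈ Y ↔ y' ∈ Y := by
      constructor
      · intro h
        obtain ⟨X, -, hun⟩ := hQ y
        have e1 : Y = X := hun Y ⟨hY, h⟩
        have e2 : Y0 = X := hun Y0 ⟨hY0, hy⟩
        rw [e1, ← e2]; exact hy'
      · intro h
        obtain ⟨X', -, hun'⟩ := hQ y'
        have e1 : Y = X' := hun' Y ⟨hY, h⟩
        have e2 : Y0 = X' := hun' Y0 ⟨hY0, hy'⟩
        rw [e1, ← e2]; exact hy
    have h1 : (grpSum G Y).coeff y = (grpSum G Y).coeff y' := by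
      rw [grpSum_apply, grpSum_apply, if_congr hmem rfl rfl]
    show (grpSum G Y).coeff y - (grpSum G Y).coeff y' = 0
    rw [h1, sub_self]
  have h2 := hker hw
  change w.coeff y - w.coeff y' = 0 at h2
  exact sub_eq_zero.mp h2

lemma parts_subset {P Q : Set (Set G)}
    (hPcov : ∀ g : G, ∃! X, X ∈ P ∧ g ∈ X)
    (hQcov : ∀ g : G, ∃! X, X ∈ Q ∧ g ∈ X)
    (hPne : ∀ X ∈ P, X.Nonempty)
    (hspan : sRingSpan G P = sRingSpan G Q) : P ⊆ Q := by
  intro X hX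
  obtain ⟨y, hy⟩ := hPne X hX
  obtain ⟨Y, ⟨hYQ, hyY⟩, -⟩ := hQcov y
  have hXY : X = Y := by
    ext z
    constructor
    · intro hz
      have hmem : grpSum G Y ∈ sRingSpan G P := by
        rw [hspan]; exact Submodule.subset_span ⟨Y, hYQ, rfl⟩
      have h := eval_eq_of_mem_span hPcov hX hz hy hmem
      rw [grpSum_apply, grpSum_apply, if_pos hyY] at h
      by_contra hzY
      rw [if_neg hzY] at h
      exact one_ne_zero h.symm
    · intro hz
      have hmem : grpSum G X ∈ sRingSpan G Q := by
        rw [← hspan]; exact Submodule.subset_span ⟨X, hX, rfl⟩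
      have h := eval_eq_of_mem_span hQcov hYQ hz hyY hmem
      rw [grpSum_apply, grpSum_apply, if_pos hy] at h
      by_contra hzX
      rw [if_neg hzX] at h
      exact one_ne_zero h.symm
  rw [hXY]; exact hYQ

end Spans

/-! #### Generic facts about stabilizer orbits -/

section Orbits

variable {G : Type*} [Group G]

lemma stabOrbits_covers (Γ : Subgroup (Equiv.Perm G)) :
    ∀ g : G, ∃! X, X ∈ stabOrbits Γ ∧ g ∈ X := by
  intro g
  refine ⟨{h | ∃ σ ∈ Γ, σ 1 = 1 ∧ σ g = h}, ⟨⟨g, rfl⟩, ⟨1, Γ.one_mem, rfl, rfl⟩⟩, ?_⟩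
  rintro X ⟨⟨g0, rfl⟩, τ, hτΓ, hτ1, hτg⟩
  ext h
  constructor
  · rintro ⟨σ, hσΓ, hσ1, hσg⟩
    have hi1 : τ⁻¹ 1 = 1 := by rw [← hτ1, Equiv.Perm.inv_def, Equiv.symm_apply_apply, hτ1]
    have hig : τ⁻¹ g = g0 := by rw [← hτg, Equiv.Perm.inv_def, Equiv.symm_apply_apply]
    exact ⟨σ * τ⁻¹, Γ.mul_mem hσΓ (Γ.inv_mem hτΓ),
      by rw [Equiv.Perm.mul_apply, hi1, hσ1],
      by rw [Equiv.Perm.mul_apply, hig, hσg]⟩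
  · rintro ⟨σ, hσΓ, hσ1, hσg⟩
    exact ⟨σ * τ, Γ.mul_mem hσΓ hτΓ,
      by rw [Equiv.Perm.mul_apply, hτ1, hσ1],
      by rw [Equiv.Perm.mul_apply, hτg, hσg]⟩

lemma stabOrbits_nonempty (Γ : Subgroup (Equiv.Perm G)) :
    ∀ X ∈ stabOrbits Γ, X.Nonempty := by
  rintro X ⟨g, rfl⟩
  exact ⟨g, ⟨1, Γ.one_mem, rfl, rfl⟩⟩

lemma rel_preserved_aux (Γ : Subgroup (Equiv.Perm G))
    (hle : rightShifts G ≤ Γ) {X : Set G} (hX : X ∈ stabOrbits Γ)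
    {σ : Equiv.Perm G} (hσ : σ ∈ Γ) (u v : G) (h : v * u⁻¹ ∈ X) :
    σ v * (σ u)⁻¹ ∈ X := by
  obtain ⟨x0, rfl⟩ := hX
  obtain ⟨τ, hτΓ, hτ1, hτx⟩ := h
  refine ⟨(Equiv.mulRight (σ u)⁻¹ : Equiv.Perm G) * σ * (Equiv.mulRight u) * τ,
    Γ.mul_mem (Γ.mul_mem (Γ.mul_mem (hle ⟨(σ u)⁻¹, rfl⟩) hσ) (hle ⟨u, rfl⟩)) hτΓ,
    ?_, ?_⟩
  · simp [Equiv.Perm.mul_apply, hτ1]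
  · simp only [Equiv.Perm.mul_apply, hτx, Equiv.coe_mulRight,
      inv_mul_cancel_right]

lemma rel_preserved (Γ : Subgroup (Equiv.Perm G))
    (hle : rightShifts G ≤ Γ) {X : Set G} (hX : X ∈ stabOrbits Γ)
    {σ : Equiv.Perm G} (hσ : σ ∈ Γ) (u v : G) :
    v * u⁻¹ ∈ X ↔ σ v * (σ u)⁻¹ ∈ X := by
  constructor
  · exact rel_preserved_aux Γ hle hX hσ u v
  · intro h
    have := rel_preserved_aux Γ hle hX (Γ.inv_mem hσ) (σ u) (σ v) h
    simpa using this

end Orbits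

/-! #### The concrete model of `M₂₇` -/

@[ext] structure Mc where
  x : ZMod 9
  y : ZMod 3
  deriving DecidableEq

def mcEquiv : ZMod 9 × ZMod 3 ≃ Mc where
  toFun p := ⟨p.1, p.2⟩
  invFun u := (u.x, u.y)
  left_inv _ := rfl
  right_inv _ := rfl

instance : Fintype Mc := Fintype.ofEquiv _ mcEquiv

def tw (j : ZMod 3) : ZMod 9 := 7 ^ j.val

lemma tw_add : ∀ j k : ZMod 3, tw (j + k) = tw j * tw k := by decide

instance : One Mc := ⟨⟨0, 0⟩⟩
instance : Mul Mc := ⟨fun u v => ⟨u.x + tw u.y * v.x, u.y + v.y⟩⟩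
instance : Inv Mc := ⟨fun u => ⟨-(tw (-u.y) * u.x), -u.y⟩⟩

lemma mc_mul_def (u v : Mc) : u * v = ⟨u.x + tw u.y * v.x, u.y + v.y⟩ := rfl
lemma mc_one_def : (1 : Mc) = ⟨0, 0⟩ := rfl

instance : Group Mc :=
  Group.ofLeftAxioms
    (by
      intro u v w
      simp only [mc_mul_def, tw_add]
      ext <;> simp <;> ring)
    (by intro u; simp only [mc_mul_def, mc_one_def]; ext <;> simp [tw])
    (by
      intro u
      show (⟨-(tw (-u.y) * u.x), -u.y⟩ : Mc) * u = 1
      simp only [mc_mul_def, mc_one_def]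
      ext <;> simp)

lemma mc_card : Nat.card Mc = 27 := by
  rw [Nat.card_eq_fintype_card]
  rfl

/-! #### The coloring and the combinatorial certificate -/

def p0 (u : Mc) : Prop := u = ⟨0, 0⟩
def p1 (u : Mc) : Prop := u = ⟨3, 1⟩ ∨ u = ⟨6, 2⟩
def p2 (u : Mc) : Prop :=
  u = ⟨1, 0⟩ ∨ u = ⟨3, 0⟩ ∨ u = ⟨6, 0⟩ ∨ u = ⟨8, 0⟩ ∨ u = ⟨4, 2⟩ ∨ u = ⟨7, 1⟩ ∨
    u = ⟨8, 1⟩ ∨ u = ⟨8, 2⟩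

instance (u : Mc) : Decidable (p0 u) := by unfold p0; infer_instance
instance (u : Mc) : Decidable (p1 u) := by unfold p1; infer_instance
instance (u : Mc) : Decidable (p2 u) := by unfold p2; infer_instance

/-- Equality of "colors" of `u` and `v`, expressed via the three basic predicates. -/
def Qc (u v : Mc) : Prop := (p0 u ↔ p0 v) ∧ (p1 u ↔ p1 v) ∧ (p2 u ↔ p2 v)

instance (u v : Mc) : Decidable (Qc u v) := by unfold Qc; infer_instance

lemma step1 : ∀ v : Mc,
    Qc ((⟨8,2⟩ : Mc) * (1 : Mc)⁻¹) (v * (1 : Mc)⁻¹) →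
    Qc ((1 : Mc) * (⟨8,2⟩ : Mc)⁻¹) ((1 : Mc) * v⁻¹) →
    Qc ((⟨8,2⟩ : Mc) * (⟨1,0⟩ : Mc)⁻¹) (v * (⟨3,0⟩ : Mc)⁻¹) →
    Qc ((⟨1,0⟩ : Mc) * (⟨8,2⟩ : Mc)⁻¹) ((⟨3,0⟩ : Mc) * v⁻¹) →
    v = ⟨6,0⟩ := by decide

lemma step2 : ∀ v : Mc,
    Qc ((⟨1,1⟩ : Mc) * (1 : Mc)⁻¹) (v * (1 : Mc)⁻¹) →
    Qc ((1 : Mc) * (⟨1,1⟩ : Mc)⁻¹) ((1 : Mc) * v⁻¹) →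
    Qc ((⟨1,1⟩ : Mc) * (⟨1,0⟩ : Mc)⁻¹) (v * (⟨3,0⟩ : Mc)⁻¹) →
    Qc ((⟨1,0⟩ : Mc) * (⟨1,1⟩ : Mc)⁻¹) ((⟨3,0⟩ : Mc) * v⁻¹) →
    Qc ((⟨1,1⟩ : Mc) * (⟨8,2⟩ : Mc)⁻¹) (v * (⟨6,0⟩ : Mc)⁻¹) →
    Qc ((⟨8,2⟩ : Mc) * (⟨1,1⟩ : Mc)⁻¹) ((⟨6,0⟩ : Mc) * v⁻¹) →
    v = ⟨0,2⟩ ∨ v = ⟨6,1⟩ := by decide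

lemma step3a : ∀ v : Mc,
    Qc ((⟨1,2⟩ : Mc) * (1 : Mc)⁻¹) (v * (1 : Mc)⁻¹) →
    Qc ((1 : Mc) * (⟨1,2⟩ : Mc)⁻¹) ((1 : Mc) * v⁻¹) →
    Qc ((⟨1,2⟩ : Mc) * (⟨1,0⟩ : Mc)⁻¹) (v * (⟨3,0⟩ : Mc)⁻¹) →
    Qc ((⟨1,0⟩ : Mc) * (⟨1,2⟩ : Mc)⁻¹) ((⟨3,0⟩ : Mc) * v⁻¹) →
    Qc ((⟨1,2⟩ : Mc) * (⟨8,2⟩ : Mc)⁻¹) (v * (⟨6,0⟩ : Mc)⁻¹) →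
    Qc ((⟨8,2⟩ : Mc) * (⟨1,2⟩ : Mc)⁻¹) ((⟨6,0⟩ : Mc) * v⁻¹) →
    Qc ((⟨1,2⟩ : Mc) * (⟨1,1⟩ : Mc)⁻¹) (v * (⟨0,2⟩ : Mc)⁻¹) →
    Qc ((⟨1,1⟩ : Mc) * (⟨1,2⟩ : Mc)⁻¹) ((⟨0,2⟩ : Mc) * v⁻¹) →
    v = ⟨6,1⟩ := by decide

lemma step4a : ∀ v : Mc,
    Qc ((⟨2,1⟩ : Mc) * (1 : Mc)⁻¹) (v * (1 : Mc)⁻¹) →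
    Qc ((1 : Mc) * (⟨2,1⟩ : Mc)⁻¹) ((1 : Mc) * v⁻¹) →
    Qc ((⟨2,1⟩ : Mc) * (⟨1,0⟩ : Mc)⁻¹) (v * (⟨3,0⟩ : Mc)⁻¹) →
    Qc ((⟨1,0⟩ : Mc) * (⟨2,1⟩ : Mc)⁻¹) ((⟨3,0⟩ : Mc) * v⁻¹) →
    Qc ((⟨2,1⟩ : Mc) * (⟨8,2⟩ : Mc)⁻¹) (v * (⟨6,0⟩ : Mc)⁻¹) →
    Qc ((⟨8,2⟩ : Mc) * (⟨2,1⟩ : Mc)⁻¹) ((⟨6,0⟩ : Mc) * v⁻¹) →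
    Qc ((⟨2,1⟩ : Mc) * (⟨1,1⟩ : Mc)⁻¹) (v * (⟨0,2⟩ : Mc)⁻¹) →
    Qc ((⟨1,1⟩ : Mc) * (⟨2,1⟩ : Mc)⁻¹) ((⟨0,2⟩ : Mc) * v⁻¹) →
    Qc ((⟨2,1⟩ : Mc) * (⟨1,2⟩ : Mc)⁻¹) (v * (⟨6,1⟩ : Mc)⁻¹) →
    Qc ((⟨1,2⟩ : Mc) * (⟨2,1⟩ : Mc)⁻¹) ((⟨6,1⟩ : Mc) * v⁻¹) →
    v = ⟨3,2⟩ := by decide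

lemma step5a : ∀ v : Mc,
    Qc ((⟨3,0⟩ : Mc) * (1 : Mc)⁻¹) (v * (1 : Mc)⁻¹) →
    Qc ((1 : Mc) * (⟨3,0⟩ : Mc)⁻¹) ((1 : Mc) * v⁻¹) →
    Qc ((⟨3,0⟩ : Mc) * (⟨1,0⟩ : Mc)⁻¹) (v * (⟨3,0⟩ : Mc)⁻¹) →
    Qc ((⟨1,0⟩ : Mc) * (⟨3,0⟩ : Mc)⁻¹) ((⟨3,0⟩ : Mc) * v⁻¹) →
    Qc ((⟨3,0⟩ : Mc) * (⟨8,2⟩ : Mc)⁻¹) (v * (⟨6,0⟩ : Mc)⁻¹) →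
    Qc ((⟨8,2⟩ : Mc) * (⟨3,0⟩ : Mc)⁻¹) ((⟨6,0⟩ : Mc) * v⁻¹) →
    Qc ((⟨3,0⟩ : Mc) * (⟨1,1⟩ : Mc)⁻¹) (v * (⟨0,2⟩ : Mc)⁻¹) →
    Qc ((⟨1,1⟩ : Mc) * (⟨3,0⟩ : Mc)⁻¹) ((⟨0,2⟩ : Mc) * v⁻¹) →
    Qc ((⟨3,0⟩ : Mc) * (⟨1,2⟩ : Mc)⁻¹) (v * (⟨6,1⟩ : Mc)⁻¹) →
    Qc ((⟨1,2⟩ : Mc) * (⟨3,0⟩ : Mc)⁻¹) ((⟨6,1⟩ : Mc) * v⁻¹) →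
    Qc ((⟨3,0⟩ : Mc) * (⟨2,1⟩ : Mc)⁻¹) (v * (⟨3,2⟩ : Mc)⁻¹) →
    Qc ((⟨2,1⟩ : Mc) * (⟨3,0⟩ : Mc)⁻¹) ((⟨3,2⟩ : Mc) * v⁻¹) →
    False := by decide

lemma step3b : ∀ v : Mc,
    Qc ((⟨1,2⟩ : Mc) * (1 : Mc)⁻¹) (v * (1 : Mc)⁻¹) →
    Qc ((1 : Mc) * (⟨1,2⟩ : Mc)⁻¹) ((1 : Mc) * v⁻¹) →
    Qc ((⟨1,2⟩ : Mc) * (⟨1,0⟩ : Mc)⁻¹) (v * (⟨3,0⟩ : Mc)⁻¹) →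
    Qc ((⟨1,0⟩ : Mc) * (⟨1,2⟩ : Mc)⁻¹) ((⟨3,0⟩ : Mc) * v⁻¹) →
    Qc ((⟨1,2⟩ : Mc) * (⟨8,2⟩ : Mc)⁻¹) (v * (⟨6,0⟩ : Mc)⁻¹) →
    Qc ((⟨8,2⟩ : Mc) * (⟨1,2⟩ : Mc)⁻¹) ((⟨6,0⟩ : Mc) * v⁻¹) →
    Qc ((⟨1,2⟩ : Mc) * (⟨1,1⟩ : Mc)⁻¹) (v * (⟨6,1⟩ : Mc)⁻¹) →
    Qc ((⟨1,1⟩ : Mc) * (⟨1,2⟩ : Mc)⁻¹) ((⟨6,1⟩ : Mc) * v⁻¹) →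
    v = ⟨0,2⟩ := by decide

lemma step4b : ∀ v : Mc,
    Qc ((⟨2,1⟩ : Mc) * (1 : Mc)⁻¹) (v * (1 : Mc)⁻¹) →
    Qc ((1 : Mc) * (⟨2,1⟩ : Mc)⁻¹) ((1 : Mc) * v⁻¹) →
    Qc ((⟨2,1⟩ : Mc) * (⟨1,0⟩ : Mc)⁻¹) (v * (⟨3,0⟩ : Mc)⁻¹) →
    Qc ((⟨1,0⟩ : Mc) * (⟨2,1⟩ : Mc)⁻¹) ((⟨3,0⟩ : Mc) * v⁻¹) →
    Qc ((⟨2,1⟩ : Mc) * (⟨8,2⟩ : Mc)⁻¹) (v * (⟨6,0⟩ : Mc)⁻¹) →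
    Qc ((⟨8,2⟩ : Mc) * (⟨2,1⟩ : Mc)⁻¹) ((⟨6,0⟩ : Mc) * v⁻¹) →
    Qc ((⟨2,1⟩ : Mc) * (⟨1,1⟩ : Mc)⁻¹) (v * (⟨6,1⟩ : Mc)⁻¹) →
    Qc ((⟨1,1⟩ : Mc) * (⟨2,1⟩ : Mc)⁻¹) ((⟨6,1⟩ : Mc) * v⁻¹) →
    Qc ((⟨2,1⟩ : Mc) * (⟨1,2⟩ : Mc)⁻¹) (v * (⟨0,2⟩ : Mc)⁻¹) →
    Qc ((⟨1,2⟩ : Mc) * (⟨2,1⟩ : Mc)⁻¹) ((⟨0,2⟩ : Mc) * v⁻¹) →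
    v = ⟨0,1⟩ := by decide

lemma step5b : ∀ v : Mc,
    Qc ((⟨3,0⟩ : Mc) * (1 : Mc)⁻¹) (v * (1 : Mc)⁻¹) →
    Qc ((1 : Mc) * (⟨3,0⟩ : Mc)⁻¹) ((1 : Mc) * v⁻¹) →
    Qc ((⟨3,0⟩ : Mc) * (⟨1,0⟩ : Mc)⁻¹) (v * (⟨3,0⟩ : Mc)⁻¹) →
    Qc ((⟨1,0⟩ : Mc) * (⟨3,0⟩ : Mc)⁻¹) ((⟨3,0⟩ : Mc) * v⁻¹) →
    Qc ((⟨3,0⟩ : Mc) * (⟨8,2⟩ : Mc)⁻¹) (v * (⟨6,0⟩ : Mc)⁻¹) →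
    Qc ((⟨8,2⟩ : Mc) * (⟨3,0⟩ : Mc)⁻¹) ((⟨6,0⟩ : Mc) * v⁻¹) →
    Qc ((⟨3,0⟩ : Mc) * (⟨1,1⟩ : Mc)⁻¹) (v * (⟨6,1⟩ : Mc)⁻¹) →
    Qc ((⟨1,1⟩ : Mc) * (⟨3,0⟩ : Mc)⁻¹) ((⟨6,1⟩ : Mc) * v⁻¹) →
    Qc ((⟨3,0⟩ : Mc) * (⟨1,2⟩ : Mc)⁻¹) (v * (⟨0,2⟩ : Mc)⁻¹) →
    Qc ((⟨1,2⟩ : Mc) * (⟨3,0⟩ : Mc)⁻¹) ((⟨0,2⟩ : Mc) * v⁻¹) →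
    Qc ((⟨3,0⟩ : Mc) * (⟨2,1⟩ : Mc)⁻¹) (v * (⟨0,1⟩ : Mc)⁻¹) →
    Qc ((⟨2,1⟩ : Mc) * (⟨3,0⟩ : Mc)⁻¹) ((⟨0,1⟩ : Mc) * v⁻¹) →
    False := by decide

end M27Aux

open M27Aux in
/-- The S-ring over `M₂₇` with basic sets `Z₀, Z₁, Z₂, Z₃` is not schurian. -/
theorem M27_sring_not_schurian
    {G : Type*} [Group G] [Finite G] (a b : G)
    (hcard : Nat.card G = 27) (ha : a ^ 9 = 1) (hb3 : b ^ 3 = 1)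
    (hab : b⁻¹ * a * b = a ^ 4) (hgen : Subgroup.closure {a, b} = ⊤)
    (Z0 Z1 Z2 Z3 : Set G) (S : Set (Set G))
    (hZ0 : Z0 = {1}) (hZ1 : Z1 = {a ^ 3 * b, a ^ 6 * b ^ 2})
    (hZ2 : Z2 = {a, a ^ 3, a ^ 6, a ^ 8, a ^ 4 * b ^ 2, a ^ 7 * b, a ^ 8 * b, a ^ 8 * b ^ 2})
    (hZ3 : Z3 = Set.univ \ (Z0 ∪ Z1 ∪ Z2))
    (hS : S = {Z0, Z1, Z2, Z3})
    (hSR : IsSRing G S) :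
    ¬ IsSchurian G S := by
  rintro ⟨Γ, hle, hspan⟩
  -- Part A: the basic sets are exactly the orbits of the point stabilizer of `Γ`.
  have hsub : S ⊆ stabOrbits Γ :=
    parts_subset hSR.covers (stabOrbits_covers Γ) hSR.nonempty hspan
  have hZ0S : Z0 ∈ S := by rw [hS]; simp
  have hZ1S : Z1 ∈ S := by rw [hS]; simp
  have hZ2S : Z2 ∈ S := by rw [hS]; simp
  -- a and a³ lie in the same Γ₁-orbit, namely Z2
  obtain ⟨g0, hg0⟩ := hsub hZ2S
  have haZ2 : a ∈ Z2 := by rw [hZ2]; simp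
  have ha3Z2 : a ^ 3 ∈ Z2 := by rw [hZ2]; simp
  rw [hg0] at haZ2 ha3Z2
  obtain ⟨σ1, h1Γ, h11, h1g⟩ := haZ2
  obtain ⟨σ2, h2Γ, h21, h2g⟩ := ha3Z2
  have hσΓ : σ2 * σ1⁻¹ ∈ Γ := Γ.mul_mem h2Γ (Γ.inv_mem h1Γ)
  set σ : Equiv.Perm G := σ2 * σ1⁻¹ with hσdef
  have hσ1 : σ 1 = 1 := by
    have h' : σ1⁻¹ 1 = 1 := by rw [← h11, Equiv.Perm.inv_def, Equiv.symm_apply_apply, h11]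
    rw [hσdef, Equiv.Perm.mul_apply, h', h21]
  have hσa : σ a = a ^ 3 := by
    have h' : σ1⁻¹ a = g0 := by rw [← h1g, Equiv.Perm.inv_def, Equiv.symm_apply_apply]
    rw [hσdef, Equiv.Perm.mul_apply, h', h2g]
  have hrel : ∀ X ∈ S, ∀ u v : G, v * u⁻¹ ∈ X ↔ σ v * (σ u)⁻¹ ∈ X :=
    fun X hX u v => rel_preserved Γ hle (hsub hX) hσΓ u v
  -- Part B: the concrete model of G
  have hconj : ∀ n : ℕ, (b * a * b⁻¹) ^ n = b * a ^ n * b⁻¹ := by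
    intro n
    induction n with
    | zero => group
    | succ k ih => rw [pow_succ, ih, pow_succ]; group
  have hx4 : (b * a * b⁻¹) ^ 4 = a := by
    rw [hconj, ← hab]; group
  have hx9 : (b * a * b⁻¹) ^ 9 = 1 := by rw [hconj, ha]; group
  have hba : b * a * b⁻¹ = a ^ 7 := by
    have h28 : (b * a * b⁻¹) ^ 28 = a ^ 7 := by
      rw [show (28 : ℕ) = 4 * 7 from rfl, pow_mul, hx4]
    rw [show (28 : ℕ) = 9 * 3 + 1 from rfl, pow_add, pow_mul, hx9, one_pow,
      one_mul, pow_one] at h28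
    exact h28
  have hba1 : b * a = a ^ 7 * b := by rw [← hba]; group
  have hban : ∀ n : ℕ, b * a ^ n = a ^ (7 * n) * b := by
    intro n
    induction n with
    | zero => simp
    | succ k ih =>
      rw [pow_succ, ← mul_assoc, ih, mul_assoc, hba1, ← mul_assoc, ← pow_add,
        show 7 * k + 7 = 7 * (k + 1) from by ring]
  have hcomm : ∀ m n : ℕ, b ^ m * a ^ n = a ^ (7 ^ m * n) * b ^ m := by
    intro m
    induction m with
    | zero => intro n; simp
    | succ k ih =>
      intro n
      rw [pow_succ, mul_assoc, hban n, ← mul_assoc, ih (7 * n), mul_assoc,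
        ← pow_succ, show 7 ^ k * (7 * n) = 7 ^ (k + 1) * n from by ring]
  have apow : ∀ m : ℕ, a ^ m = a ^ (m % 9) := by
    intro m
    conv_lhs => rw [← Nat.div_add_mod m 9]
    rw [pow_add, pow_mul, ha, one_pow, one_mul]
  have bpow : ∀ m : ℕ, b ^ m = b ^ (m % 3) := by
    intro m
    conv_lhs => rw [← Nat.div_add_mod m 3]
    rw [pow_add, pow_mul, hb3, one_pow, one_mul]
  have akey : ∀ n : ℕ, a ^ ((n : ZMod 9)).val = a ^ n := by
    intro n; rw [ZMod.val_natCast, ← apow]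
  have bkey : ∀ n : ℕ, b ^ ((n : ZMod 3)).val = b ^ n := by
    intro n; rw [ZMod.val_natCast, ← bpow]
  let φ : Mc →* G :=
    { toFun := fun u => a ^ u.x.val * b ^ u.y.val
      map_one' := by
        show a ^ (0 : ZMod 9).val * b ^ (0 : ZMod 3).val = 1
        rw [ZMod.val_zero, ZMod.val_zero, pow_zero, pow_zero, one_mul]
      map_mul' := by
        intro u v
        show a ^ ((u.x + tw u.y * v.x).val) * b ^ ((u.y + v.y).val)
          = (a ^ u.x.val * b ^ u.y.val) * (a ^ v.x.val * b ^ v.y.val)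
        have e1 : ((u.x.val + 7 ^ u.y.val * v.x.val : ℕ) : ZMod 9)
            = u.x + tw u.y * v.x := by
          push_cast [tw]
          rw [ZMod.natCast_zmod_val, ZMod.natCast_zmod_val]
        have e2 : ((u.y.val + v.y.val : ℕ) : ZMod 3) = u.y + v.y := by
          push_cast
          rw [ZMod.natCast_zmod_val, ZMod.natCast_zmod_val]
        rw [← e1, ← e2, akey, bkey]
        calc a ^ (u.x.val + 7 ^ u.y.val * v.x.val) * b ^ (u.y.val + v.y.val)
            = a ^ u.x.val * ((a ^ (7 ^ u.y.val * v.x.val) * b ^ u.y.val) * b ^ v.y.val) := by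
              rw [pow_add, pow_add]; group
          _ = a ^ u.x.val * ((b ^ u.y.val * a ^ v.x.val) * b ^ v.y.val) := by
              rw [hcomm]
          _ = (a ^ u.x.val * b ^ u.y.val) * (a ^ v.x.val * b ^ v.y.val) := by
              group }
  have hφa : φ ⟨1, 0⟩ = a := by
    show a ^ (1 : ZMod 9).val * b ^ (0 : ZMod 3).val = a
    rw [show (1 : ZMod 9).val = 1 from rfl, show (0 : ZMod 3).val = 0 from rfl,
      pow_one, pow_zero, mul_one]
  have hφb : φ ⟨0, 1⟩ = b := by
    show a ^ (0 : ZMod 9).val * b ^ (1 : ZMod 3).val = b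
    rw [show (0 : ZMod 9).val = 0 from rfl, show (1 : ZMod 3).val = 1 from rfl,
      pow_zero, pow_one, one_mul]
  have hsurj : Function.Surjective φ := by
    rw [← MonoidHom.range_eq_top, ← top_le_iff, ← hgen, Subgroup.closure_le]
    intro x hx
    simp only [Set.mem_insert_iff, Set.mem_singleton_iff] at hx
    rcases hx with rfl | rfl
    · exact ⟨⟨1, 0⟩, hφa⟩
    · exact ⟨⟨0, 1⟩, hφb⟩
  have hbij : Function.Bijective φ :=
    (Nat.bijective_iff_surjective_and_card φ).mpr ⟨hsurj, by rw [mc_card, hcard]⟩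
  set E : Mc ≃* G := MulEquiv.ofBijective φ hbij with hEdef
  have hEv : ∀ u : Mc, E u = a ^ u.x.val * b ^ u.y.val := fun _ => rfl
  have him : ∀ (i : ZMod 9) (j : ZMod 3) (ni nj : ℕ), i.val = ni → j.val = nj →
      E ⟨i, j⟩ = a ^ ni * b ^ nj := by
    intro i j ni nj hi hj
    rw [hEv, hi, hj]
  have f1 : E ⟨1, 0⟩ = a := by rw [him 1 0 1 0 rfl rfl, pow_one, pow_zero, mul_one]
  have f2 : E ⟨3, 0⟩ = a ^ 3 := by rw [him 3 0 3 0 rfl rfl, pow_zero, mul_one]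
  have f3 : E ⟨6, 0⟩ = a ^ 6 := by rw [him 6 0 6 0 rfl rfl, pow_zero, mul_one]
  have f4 : E ⟨8, 0⟩ = a ^ 8 := by rw [him 8 0 8 0 rfl rfl, pow_zero, mul_one]
  have f5 : E ⟨4, 2⟩ = a ^ 4 * b ^ 2 := him 4 2 4 2 rfl rfl
  have f6 : E ⟨7, 1⟩ = a ^ 7 * b := by rw [him 7 1 7 1 rfl rfl, pow_one]
  have f7 : E ⟨8, 1⟩ = a ^ 8 * b := by rw [him 8 1 8 1 rfl rfl, pow_one]
  have f8 : E ⟨8, 2⟩ = a ^ 8 * b ^ 2 := him 8 2 8 2 rfl rfl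
  have g1 : E ⟨3, 1⟩ = a ^ 3 * b := by rw [him 3 1 3 1 rfl rfl, pow_one]
  have g2 : E ⟨6, 2⟩ = a ^ 6 * b ^ 2 := him 6 2 6 2 rfl rfl
  have hinj : Function.Injective E := E.injective
  have hT0 : ∀ u : Mc, E u ∈ Z0 ↔ p0 u := by
    intro u
    rw [hZ0, Set.mem_singleton_iff, EmbeddingLike.map_eq_one_iff]
    exact Iff.rfl
  have hT1 : ∀ u : Mc, E u ∈ Z1 ↔ p1 u := by
    intro u
    rw [hZ1]
    simp only [Set.mem_insert_iff, Set.mem_singleton_iff]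
    rw [← g1, ← g2, hinj.eq_iff, hinj.eq_iff]
    exact Iff.rfl
  have hT2 : ∀ u : Mc, E u ∈ Z2 ↔ p2 u := by
    intro u
    rw [hZ2]
    simp only [Set.mem_insert_iff, Set.mem_singleton_iff]
    rw [← f5, ← f6, ← f7, ← f8, ← f2, ← f3, ← f4, ← f1,
      hinj.eq_iff, hinj.eq_iff, hinj.eq_iff, hinj.eq_iff,
      hinj.eq_iff, hinj.eq_iff, hinj.eq_iff, hinj.eq_iff]
    exact Iff.rfl
  set σc : Mc → Mc := fun u => E.symm (σ (E u)) with hσcdef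
  have hEσ : ∀ u : Mc, E (σc u) = σ (E u) := fun u => E.apply_symm_apply _
  have HQ : ∀ g h : Mc, Qc (h * g⁻¹) (σc h * (σc g)⁻¹) := by
    intro g h
    have key : ∀ X ∈ S, (E (h * g⁻¹) ∈ X ↔ E (σc h * (σc g)⁻¹) ∈ X) := by
      intro X hX
      rw [map_mul, map_inv, map_mul, map_inv, hEσ g, hEσ h]
      exact hrel X hX (E g) (E h)
    exact ⟨by rw [← hT0, ← hT0]; exact key Z0 hZ0S,
      by rw [← hT1, ← hT1]; exact key Z1 hZ1S,
      by rw [← hT2, ← hT2]; exact key Z2 hZ2S⟩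
  have hσc1 : σc 1 = 1 := by
    show E.symm (σ (E 1)) = 1
    rw [map_one, hσ1, map_one]
  have hσcA : σc ⟨1, 0⟩ = ⟨3, 0⟩ := by
    show E.symm (σ (E ⟨1, 0⟩)) = ⟨3, 0⟩
    rw [f1, hσa, ← f2, MulEquiv.symm_apply_apply]
  -- Part C: the combinatorial certificate
  have q1 := HQ 1 ⟨8, 2⟩; rw [hσc1] at q1
  have q2 := HQ ⟨8, 2⟩ 1; rw [hσc1] at q2
  have q3 := HQ ⟨1, 0⟩ ⟨8, 2⟩; rw [hσcA] at q3
  have q4 := HQ ⟨8, 2⟩ ⟨1, 0⟩; rw [hσcA] at q4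
  have h82 : σc ⟨8, 2⟩ = ⟨6, 0⟩ := step1 _ q1 q2 q3 q4
  have q5 := HQ 1 ⟨1, 1⟩; rw [hσc1] at q5
  have q6 := HQ ⟨1, 1⟩ 1; rw [hσc1] at q6
  have q7 := HQ ⟨1, 0⟩ ⟨1, 1⟩; rw [hσcA] at q7
  have q8 := HQ ⟨1, 1⟩ ⟨1, 0⟩; rw [hσcA] at q8
  have q9 := HQ ⟨8, 2⟩ ⟨1, 1⟩; rw [h82] at q9
  have q10 := HQ ⟨1, 1⟩ ⟨8, 2⟩; rw [h82] at q10
  have r1 := HQ 1 ⟨1, 2⟩; rw [hσc1] at r1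
  have r2 := HQ ⟨1, 2⟩ 1; rw [hσc1] at r2
  have r3 := HQ ⟨1, 0⟩ ⟨1, 2⟩; rw [hσcA] at r3
  have r4 := HQ ⟨1, 2⟩ ⟨1, 0⟩; rw [hσcA] at r4
  have r5 := HQ ⟨8, 2⟩ ⟨1, 2⟩; rw [h82] at r5
  have r6 := HQ ⟨1, 2⟩ ⟨8, 2⟩; rw [h82] at r6
  have s1 := HQ 1 ⟨2, 1⟩; rw [hσc1] at s1
  have s2 := HQ ⟨2, 1⟩ 1; rw [hσc1] at s2
  have s3 := HQ ⟨1, 0⟩ ⟨2, 1⟩; rw [hσcA] at s3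
  have s4 := HQ ⟨2, 1⟩ ⟨1, 0⟩; rw [hσcA] at s4
  have s5 := HQ ⟨8, 2⟩ ⟨2, 1⟩; rw [h82] at s5
  have s6 := HQ ⟨2, 1⟩ ⟨8, 2⟩; rw [h82] at s6
  have t1 := HQ 1 ⟨3, 0⟩; rw [hσc1] at t1
  have t2 := HQ ⟨3, 0⟩ 1; rw [hσc1] at t2
  have t3 := HQ ⟨1, 0⟩ ⟨3, 0⟩; rw [hσcA] at t3
  have t4 := HQ ⟨3, 0⟩ ⟨1, 0⟩; rw [hσcA] at t4
  have t5 := HQ ⟨8, 2⟩ ⟨3, 0⟩; rw [h82] at t5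
  have t6 := HQ ⟨3, 0⟩ ⟨8, 2⟩; rw [h82] at t6
  rcases step2 _ q5 q6 q7 q8 q9 q10 with h11 | h11
  · -- σc ⟨1,1⟩ = ⟨0,2⟩
    have r7 := HQ ⟨1, 1⟩ ⟨1, 2⟩; rw [h11] at r7
    have r8 := HQ ⟨1, 2⟩ ⟨1, 1⟩; rw [h11] at r8
    have h12 : σc ⟨1, 2⟩ = ⟨6, 1⟩ := step3a _ r1 r2 r3 r4 r5 r6 r7 r8
    have s7 := HQ ⟨1, 1⟩ ⟨2, 1⟩; rw [h11] at s7
    have s8 := HQ ⟨2, 1⟩ ⟨1, 1⟩; rw [h11] at s8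
    have s9 := HQ ⟨1, 2⟩ ⟨2, 1⟩; rw [h12] at s9
    have s10 := HQ ⟨2, 1⟩ ⟨1, 2⟩; rw [h12] at s10
    have h21' : σc ⟨2, 1⟩ = ⟨3, 2⟩ := step4a _ s1 s2 s3 s4 s5 s6 s7 s8 s9 s10
    have t7 := HQ ⟨1, 1⟩ ⟨3, 0⟩; rw [h11] at t7
    have t8 := HQ ⟨3, 0⟩ ⟨1, 1⟩; rw [h11] at t8
    have t9 := HQ ⟨1, 2⟩ ⟨3, 0⟩; rw [h12] at t9
    have t10 := HQ ⟨3, 0⟩ ⟨1, 2⟩; rw [h12] at t10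
    have t11 := HQ ⟨2, 1⟩ ⟨3, 0⟩; rw [h21'] at t11
    have t12 := HQ ⟨3, 0⟩ ⟨2, 1⟩; rw [h21'] at t12
    exact step5a _ t1 t2 t3 t4 t5 t6 t7 t8 t9 t10 t11 t12
  · -- σc ⟨1,1⟩ = ⟨6,1⟩
    have r7 := HQ ⟨1, 1⟩ ⟨1, 2⟩; rw [h11] at r7
    have r8 := HQ ⟨1, 2⟩ ⟨1, 1⟩; rw [h11] at r8
    have h12 : σc ⟨1, 2⟩ = ⟨0, 2⟩ := step3b _ r1 r2 r3 r4 r5 r6 r7 r8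
    have s7 := HQ ⟨1, 1⟩ ⟨2, 1⟩; rw [h11] at s7
    have s8 := HQ ⟨2, 1⟩ ⟨1, 1⟩; rw [h11] at s8
    have s9 := HQ ⟨1, 2⟩ ⟨2, 1⟩; rw [h12] at s9
    have s10 := HQ ⟨2, 1⟩ ⟨1, 2⟩; rw [h12] at s10
    have h21' : σc ⟨2, 1⟩ = ⟨0, 1⟩ := step4b _ s1 s2 s3 s4 s5 s6 s7 s8 s9 s10
    have t7 := HQ ⟨1, 1⟩ ⟨3, 0⟩; rw [h11] at t7
    have t8 := HQ ⟨3, 0⟩ ⟨1, 1⟩; rw [h11] at t8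
    have t9 := HQ ⟨1, 2⟩ ⟨3, 0⟩; rw [h12] at t9
    have t10 := HQ ⟨3, 0⟩ ⟨1, 2⟩; rw [h12] at t10
    have t11 := HQ ⟨2, 1⟩ ⟨3, 0⟩; rw [h21'] at t11
    have t12 := HQ ⟨3, 0⟩ ⟨2, 1⟩; rw [h21'] at t12
    exact step5b _ t1 t2 t3 t4 t5 t6 t7 t8 t9 t10 t11 t12
end

section
/- Let n ≥ 4, G = M_{3^n}, c = a^{3^{n-2}}, C = ⟨c⟩, B = ⟨b⟩, H = C×B, and let 𝒜 be the S-ring over G whose basic sets are Z₀ = {e}, Z₁ = {b, b²}, Z₂ = {c, c²}, Z₃ = {cb, cb², c²b, c²b²}, Z₄ = a{e, cb, c²b²} ∪ a⁻¹{e, c²b, cb²}, Z₅ = (aH ∪ a⁻¹H) \ Z₄, X_k = a^{3k}C ∪ a^{-3k}C and Y_k = (a^{3k}H ∪ a^{-3k}H) \ X_k for k = 1,…,(3^{n-3}−1)/2, and T_j = a^jH ∪ a^{-j}H for 2 ≤ j ≤ (3^{n-2}−1)/2 with 3 ∤ j. If 𝒜 is schurian, then for every α ∈ Aut(𝒜)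 exactly one of the following holds: α maps each coset of H in G to itself, or α maps the coset a^iH to a^{-i}H for every integer i. -/
open scoped Pointwise

open scoped Pointwise

section Helpers

lemma psi_lin (m : ℤ) (hm : 3 ≤ m) (ψ : ℕ → ℤ) (h0 : m ∣ ψ 0)
    (hadj : ∀ i : ℕ, m ∣ (ψ (i+1) - ψ i - 1) ∨ m ∣ (ψ (i+1) - ψ i + 1))
    (hinj : ∀ i j : ℕ, m ∣ (ψ i - ψ j) → m ∣ ((i : ℤ) - (j : ℤ))) :
    ∃ ε : ℤ, (ε = 1 ∨ ε = -1) ∧ ∀ i : ℕ, m ∣ (ψ i - ε * i) := by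
  have hm2 : ¬ (m ∣ 2) := fun h => by have := Int.le_of_dvd (by norm_num) h; omega
  obtain ⟨z, hz⟩ := h0
  rcases hadj 0 with h1 | h1
  · refine ⟨1, Or.inl rfl, ?_⟩
    have key : ∀ i : ℕ, m ∣ (ψ i - (i:ℤ)) ∧ m ∣ (ψ (i+1) - ((i:ℤ)+1)) := by
      intro i
      induction i with
      | zero =>
        obtain ⟨x, hx⟩ := h1
        exact ⟨⟨z, by push_cast; linarith⟩, ⟨x + z, by push_cast at hx ⊢; linarith⟩⟩
      | succ k ih =>
        obtain ⟨y, hy⟩ := ih.1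
        obtain ⟨w, hw⟩ := ih.2
        refine ⟨⟨w, by push_cast at hw ⊢; linarith⟩, ?_⟩
        rcases hadj (k+1) with h2 | h2
        · obtain ⟨x, hx⟩ := h2
          exact ⟨x + w, by push_cast at hx hw ⊢; linarith⟩
        · exfalso
          obtain ⟨x, hx⟩ := h2
          have hs : m ∣ (ψ (k+1+1) - ψ k) := ⟨x + w - y, by linarith⟩
          obtain ⟨v, hv⟩ := hinj (k+1+1) k hs
          exact hm2 ⟨v, by push_cast at hv ⊢; linarith⟩
    intro i
    obtain ⟨y, hy⟩ := (key i).1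
    exact ⟨y, by linarith⟩
  · refine ⟨-1, Or.inr rfl, ?_⟩
    have key : ∀ i : ℕ, m ∣ (ψ i + (i:ℤ)) ∧ m ∣ (ψ (i+1) + ((i:ℤ)+1)) := by
      intro i
      induction i with
      | zero =>
        obtain ⟨x, hx⟩ := h1
        exact ⟨⟨z, by push_cast; linarith⟩, ⟨x + z, by push_cast at hx ⊢; linarith⟩⟩
      | succ k ih =>
        obtain ⟨y, hy⟩ := ih.1
        obtain ⟨w, hw⟩ := ih.2
        refine ⟨⟨w, by push_cast at hw ⊢; linarith⟩, ?_⟩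
        rcases hadj (k+1) with h2 | h2
        · exfalso
          obtain ⟨x, hx⟩ := h2
          have hs : m ∣ (ψ (k+1+1) - ψ k) := ⟨x + w - y, by linarith⟩
          obtain ⟨v, hv⟩ := hinj (k+1+1) k hs
          exact hm2 ⟨v, by push_cast at hv ⊢; linarith⟩
        · obtain ⟨x, hx⟩ := h2
          exact ⟨x + w, by push_cast at hx hw ⊢; linarith⟩
    intro i
    obtain ⟨y, hy⟩ := (key i).1
    exact ⟨y, by linarith⟩

lemma order_eq (n : ℕ) (hn : 4 ≤ n) {G : Type*} [Group G] [Finite G] (a b : G)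
    (hcard : Nat.card G = 3 ^ n) (ha : a ^ (3 ^ (n - 1)) = 1) (hb3 : b ^ 3 = 1)
    (hab : b⁻¹ * a * b = a ^ (3 ^ (n - 2) + 1))
    (hgen : Subgroup.closure {a, b} = ⊤) :
    orderOf a = 3 ^ (n - 1) := by
  set M := 3 ^ (n - 2) with hM
  set A := Subgroup.zpowers a with hA
  have hbb : b * b = b⁻¹ := by
    apply eq_inv_of_mul_eq_one_left
    have : b ^ 3 = b * b * b := by rw [pow_succ, pow_succ, pow_one]
    rw [← this, hb3]
  have hbibi : b⁻¹ * b⁻¹ = b := by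
    rw [← mul_inv_rev, hbb, inv_inv]
  have hstep : b⁻¹ * a ^ (M + 1) * b = a ^ ((M + 1) * (M + 1)) := by
    have : b⁻¹ * a ^ (M+1) * (b⁻¹)⁻¹ = (b⁻¹ * a * (b⁻¹)⁻¹) ^ (M+1) := (conj_pow).symm
    rw [inv_inv] at this
    rw [this, hab, ← pow_mul]
  have hbab : b * a * b⁻¹ = a ^ ((M + 1) * (M + 1)) := by
    have e : b⁻¹ * (b⁻¹ * a * b) * b = b⁻¹ * a ^ (M+1) * b := by rw [hab]
    rw [hstep] at e
    have e2 : b⁻¹ * (b⁻¹ * a * b) * b = (b⁻¹ * b⁻¹) * a * (b * b) := by group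
    rw [e2, hbibi, hbb] at e
    exact e
  have hbA : b ∈ Subgroup.normalizer (A : Set G) := by
    apply Subgroup.mem_normalizer_fintype
    rintro x ⟨k, rfl⟩
    refine ⟨((M+1)*(M+1) : ℕ) * k, ?_⟩
    have : b * a ^ k * b⁻¹ = (b * a * b⁻¹) ^ k := conj_zpow.symm
    rw [hbab, ← zpow_natCast, ← zpow_mul] at this
    exact this.symm
  have haA : a ∈ Subgroup.normalizer (A : Set G) := Subgroup.le_normalizer (Subgroup.mem_zpowers a)
  have hnorm : A.Normal := by
    rw [← Subgroup.normalizer_eq_top_iff]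
    refine le_antisymm le_top ?_
    rw [← hgen]
    apply Subgroup.closure_le _ |>.mpr
    rintro x (rfl | rfl) <;> assumption
  let Q := G ⧸ A
  let π := QuotientGroup.mk' A
  have hsurj : Function.Surjective π := QuotientGroup.mk'_surjective A
  have hmapgen : Subgroup.closure (π '' {a, b}) = ⊤ := by
    rw [← MonoidHom.map_closure, hgen, Subgroup.map_top_of_surjective _ hsurj]
  have hpia : π a = 1 := (QuotientGroup.eq_one_iff a).mpr (Subgroup.mem_zpowers a)
  have htopz : Subgroup.zpowers (π b) = ⊤ := by
    refine le_antisymm le_top ?_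
    rw [← hmapgen]
    apply Subgroup.closure_le _ |>.mpr
    rintro x ⟨y, (rfl | rfl), rfl⟩
    · rw [hpia]; exact one_mem _
    · exact Subgroup.mem_zpowers _
  have hcardQ : Nat.card Q = orderOf (π b) := by
    rw [← Nat.card_zpowers, htopz, Subgroup.card_top]
  have hdvd3 : orderOf (π b) ∣ 3 := orderOf_dvd_of_pow_eq_one (by rw [← map_pow, hb3, map_one])
  have hAcard : Nat.card A = orderOf a := Nat.card_zpowers a
  have hch : Nat.card G = Nat.card Q * Nat.card A :=
    Subgroup.card_eq_card_quotient_mul_card_subgroup A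
  have horda_dvd : orderOf a ∣ 3 ^ (n - 1) := orderOf_dvd_of_pow_eq_one ha
  have h1 : orderOf a ≤ 3 ^ (n - 1) := Nat.le_of_dvd (by positivity) horda_dvd
  have hq3 : Nat.card Q ≤ 3 := hcardQ ▸ Nat.le_of_dvd (by norm_num) hdvd3
  have hpow : (3:ℕ) ^ n = 3 ^ (n - 1) * 3 := by
    rw [← pow_succ]; congr 1; omega
  have hmul : Nat.card Q * Nat.card A ≤ 3 * orderOf a := by
    rw [hAcard]; exact Nat.mul_le_mul_right _ hq3
  rw [← hch, hcard, hpow] at hmul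
  omega

lemma zpow3 {G : Type*} [Group G] (c : G) (h : c ^ 3 = 1) (i : ℤ) :
    c ^ i = 1 ∨ c ^ i = c ∨ c ^ i = c ^ 2 := by
  have h3 : c ^ (3:ℤ) = 1 := by
    rw [show (3:ℤ) = ((3:ℕ):ℤ) by norm_num, zpow_natCast, h]
  have hred : c ^ i = c ^ (i % 3) := by
    conv_lhs => rw [show i = 3 * (i / 3) + i % 3 from (Int.mul_ediv_add_emod i 3).symm]
    rw [zpow_add, zpow_mul, h3, one_zpow, one_mul]
  have h0 : 0 ≤ i % 3 := Int.emod_nonneg i (by norm_num)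
  have h2 : i % 3 < 3 := Int.emod_lt_of_pos i (by norm_num)
  have : i % 3 = 0 ∨ i % 3 = 1 ∨ i % 3 = 2 := by omega
  rcases this with h' | h' | h'
  · left; rw [hred, h', zpow_zero]
  · right; left; rw [hred, h', zpow_one]
  · right; right; rw [hred, h', show (2:ℤ) = ((2:ℕ):ℤ) by norm_num, zpow_natCast]

end Helpers
set_option maxHeartbeats 3000000 in
/-- If the S-ring `𝒜` over `M_{3^n}` (`n ≥ 4`) is schurian, then every `α ∈ Aut(𝒜)`
either maps each coset of `H` to itself, or maps `aⁱH` to `a⁻ⁱH` for every `i` —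
exactly one of the two. -/
theorem M3n_aut_cosets
    (n : ℕ) (hn : 4 ≤ n) {G : Type*} [Group G] [Finite G] (a b c : G)
    (hcard : Nat.card G = 3 ^ n) (ha : a ^ (3 ^ (n - 1)) = 1) (hb3 : b ^ 3 = 1)
    (hab : b⁻¹ * a * b = a ^ (3 ^ (n - 2) + 1))
    (hgen : Subgroup.closure {a, b} = ⊤)
    (hc : c = a ^ (3 ^ (n - 2)))
    (Cs Bs Hs : Set G)
    (hCs : Cs = (Subgroup.zpowers c : Set G))
    (hBs : Bs = (Subgroup.zpowers b : Set G))
    (hHs : Hs = Cs * Bs)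
    (Z0 Z1 Z2 Z3 Z4 Z5 : Set G) (Xk Yk Tj : ℕ → Set G) (S : Set (Set G))
    (hZ0 : Z0 = {1}) (hZ1 : Z1 = {b, b ^ 2}) (hZ2 : Z2 = {c, c ^ 2})
    (hZ3 : Z3 = {c * b, c * b ^ 2, c ^ 2 * b, c ^ 2 * b ^ 2})
    (hZ4 : Z4 = a • ({1, c * b, c ^ 2 * b ^ 2} : Set G) ∪
        a⁻¹ • ({1, c ^ 2 * b, c * b ^ 2} : Set G))
    (hZ5 : Z5 = (a • Hs ∪ a⁻¹ • Hs) \ Z4)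
    (hXk : ∀ k, Xk k = a ^ (3 * k) • Cs ∪ (a ^ (3 * k))⁻¹ • Cs)
    (hYk : ∀ k, Yk k = (a ^ (3 * k) • Hs ∪ (a ^ (3 * k))⁻¹ • Hs) \ Xk k)
    (hTj : ∀ j, Tj j = a ^ j • Hs ∪ (a ^ j)⁻¹ • Hs)
    (hS : S = {Z0, Z1, Z2, Z3, Z4, Z5}
      ∪ {W | ∃ k : ℕ, 1 ≤ k ∧ k ≤ (3 ^ (n - 3) - 1) / 2 ∧ W = Xk k}
      ∪ {W | ∃ k : ℕ, 1 ≤ k ∧ k ≤ (3 ^ (n - 3) - 1) / 2 ∧ W = Yk k}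
      ∪ {W | ∃ j : ℕ, 2 ≤ j ∧ j ≤ (3 ^ (n - 2) - 1) / 2 ∧ ¬ (3 ∣ j) ∧ W = Tj j})
    (hSR : IsSRing G S) (hSch : IsSchurian G S) :
    ∀ f ∈ srAut S,
      Xor' (∀ g : G, f '' (g • Hs) = g • Hs)
           (∀ i : ℤ, f '' (a ^ i • Hs) = a ^ (-i) • Hs) := by
  set M := 3 ^ (n - 2) with hM
  -- basic numeric facts
  have hM9 : (9:ℕ) ≤ M := by
    calc (9:ℕ) = 3 ^ 2 := by norm_num
    _ ≤ 3 ^ (n - 2) := Nat.pow_le_pow_right (by norm_num) (by omega)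
  have hMpos : 0 < M := by omega
  have hnotdvd2 : ¬ ((M:ℤ) ∣ 2) := fun h => by
    have := Int.le_of_dvd (by norm_num) h; omega
  -- order of a
  have horda : orderOf a = 3 ^ (n - 1) := order_eq n hn a b hcard ha hb3 hab hgen
  have hpowM3 : M * 3 = 3 ^ (n - 1) := by
    rw [hM, ← pow_succ]; congr 1; omega
  -- c facts
  have hc3 : c ^ 3 = 1 := by
    rw [hc, ← pow_mul, hpowM3, ha]
  have hac : a * c = c * a := by
    rw [hc]; exact (Commute.pow_right (Commute.refl a) _)
  have haMM : a ^ (M * M) = 1 := by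
    apply orderOf_dvd_iff_pow_eq_one.mp
    rw [horda, hM, ← pow_add]
    exact pow_dvd_pow 3 (by omega)
  have hcbc : b⁻¹ * c * b = c := by
    have e1 : b⁻¹ * a ^ M * b = (b⁻¹ * a * b) ^ M := by
      have := (conj_pow (a := b⁻¹) (b := a) (i := M))
      rw [inv_inv] at this
      exact this.symm
    rw [hab, ← pow_mul] at e1
    have e2 : a ^ ((M + 1) * M) = a ^ (M * M) * a ^ M := by
      rw [← pow_add]; congr 1; ring
    rw [e2, haMM, one_mul] at e1
    rw [hc, e1]
  have hcb : c * b = b * c := by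
    have : c * b = b * (b⁻¹ * c * b) := by group
    rw [this, hcbc]
  have hCcb : Commute c b := hcb
  -- more conjugation formulas
  have habc : b⁻¹ * a * b = a * c := by
    rw [hab, pow_succ', ← hc]
  have haba : a * b * a⁻¹ = b * c := by
    have e : a * b = b * (a * c) := by
      rw [← habc]; group
    calc a * b * a⁻¹ = b * (a * c) * a⁻¹ := by rw [e]
    _ = b * (c * (a * a⁻¹)) := by rw [hac]; group
    _ = b * c := by group
  have haca : a * c * a⁻¹ = c := by rw [hac]; group
  have hbcb : b * c * b⁻¹ = c := by rw [← hcb]; group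
  -- membership in Hs
  have hmemHs : ∀ x : G, x ∈ Hs ↔ ∃ i j : ℤ, c ^ i * b ^ j = x := by
    intro x
    rw [hHs, Set.mem_mul]
    constructor
    · rintro ⟨u, hu, v, hv, rfl⟩
      rw [hCs] at hu; rw [hBs] at hv
      obtain ⟨i, rfl⟩ := Subgroup.mem_zpowers_iff.mp hu
      obtain ⟨j, rfl⟩ := Subgroup.mem_zpowers_iff.mp hv
      exact ⟨i, j, rfl⟩
    · rintro ⟨i, j, rfl⟩
      exact ⟨c ^ i, by rw [hCs]; exact Subgroup.zpow_mem _ (Subgroup.mem_zpowers c) i,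
             b ^ j, by rw [hBs]; exact Subgroup.zpow_mem _ (Subgroup.mem_zpowers b) j, rfl⟩
  -- Hs is a subgroup
  have hmul_mem : ∀ x ∈ Hs, ∀ y ∈ Hs, x * y ∈ Hs := by
    intro x hx y hy
    obtain ⟨i, j, rfl⟩ := (hmemHs x).mp hx
    obtain ⟨k, l, rfl⟩ := (hmemHs y).mp hy
    refine (hmemHs _).mpr ⟨i + k, j + l, ?_⟩
    have hbc : b ^ j * c ^ k = c ^ k * b ^ j := (hCcb.symm.zpow_zpow j k)
    rw [zpow_add, zpow_add]
    calc c ^ i * c ^ k * (b ^ j * b ^ l)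
        = c ^ i * (c ^ k * b ^ j) * b ^ l := by group
    _ = c ^ i * (b ^ j * c ^ k) * b ^ l := by rw [hbc]
    _ = c ^ i * b ^ j * (c ^ k * b ^ l) := by group
  have hinv_mem : ∀ x ∈ Hs, x⁻¹ ∈ Hs := by
    intro x hx
    obtain ⟨i, j, rfl⟩ := (hmemHs x).mp hx
    refine (hmemHs _).mpr ⟨-i, -j, ?_⟩
    have hbc : b ^ (-j) * c ^ (-i) = c ^ (-i) * b ^ (-j) := (hCcb.symm.zpow_zpow _ _)
    rw [← hbc, mul_inv_rev, ← zpow_neg, ← zpow_neg]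
  have hone_mem : (1:G) ∈ Hs := (hmemHs 1).mpr ⟨0, 0, by simp⟩
  -- normality of Hs (as a set)
  have hconj_a : ∀ x ∈ Hs, a * x * a⁻¹ ∈ Hs := by
    intro x hx
    obtain ⟨i, j, rfl⟩ := (hmemHs x).mp hx
    have e1 : a * (c ^ i * b ^ j) * a⁻¹ = (a * c ^ i * a⁻¹) * (a * b ^ j * a⁻¹) := by group
    have e2 : a * c ^ i * a⁻¹ = c ^ i := by
      rw [show a * c ^ i * a⁻¹ = (a * c * a⁻¹) ^ i from conj_zpow.symm, haca]
    have e3 : a * b ^ j * a⁻¹ = (b * c) ^ j := by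
      rw [show a * b ^ j * a⁻¹ = (a * b * a⁻¹) ^ j from conj_zpow.symm, haba]
    refine (hmemHs _).mpr ⟨i + j, j, ?_⟩
    rw [e1, e2, e3, (hCcb.symm.mul_zpow j)]
    have hbc : b ^ j * c ^ j = c ^ j * b ^ j := (hCcb.symm.zpow_zpow _ _)
    rw [hbc, zpow_add]
    group
  have hconj_b : ∀ x ∈ Hs, b * x * b⁻¹ ∈ Hs := by
    intro x hx
    obtain ⟨i, j, rfl⟩ := (hmemHs x).mp hx
    have e1 : b * (c ^ i * b ^ j) * b⁻¹ = (b * c ^ i * b⁻¹) * (b * b ^ j * b⁻¹) := by group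
    have e2 : b * c ^ i * b⁻¹ = c ^ i := by
      rw [show b * c ^ i * b⁻¹ = (b * c * b⁻¹) ^ i from conj_zpow.symm, hbcb]
    have e3 : b * b ^ j * b⁻¹ = b ^ j := by group
    refine (hmemHs _).mpr ⟨i, j, ?_⟩
    rw [e1, e2, e3]
  -- the subgroup with carrier Hs
  let Hgrp : Subgroup G :=
    { carrier := Hs
      one_mem' := hone_mem
      mul_mem' := fun hx hy => hmul_mem _ hx _ hy
      inv_mem' := fun hx => hinv_mem _ hx }
  have hHgrp : ∀ x : G, x ∈ Hgrp ↔ x ∈ Hs := fun x => Iff.rfl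
  have hnormal : Hgrp.Normal := by
    rw [← Subgroup.normalizer_eq_top_iff]
    refine le_antisymm le_top ?_
    rw [← hgen]
    apply Subgroup.closure_le _ |>.mpr
    rintro x (rfl | rfl)
    · exact Subgroup.mem_normalizer_fintype (fun y hy => hconj_a y hy)
    · exact Subgroup.mem_normalizer_fintype (fun y hy => hconj_b y hy)
  have hconj_mem : ∀ (g x : G), x ∈ Hs → g * x * g⁻¹ ∈ Hs :=
    fun g x hx => hnormal.conj_mem x hx g
  -- a ^ k ∈ Hs iff M ∣ k
  have hak : ∀ k : ℤ, a ^ k ∈ Hs ↔ (M:ℤ) ∣ k := by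
    intro k
    constructor
    · intro hk
      obtain ⟨i, j, hij⟩ := (hmemHs _).mp hk
      have hcube : a ^ (k * 3) = 1 := by
        have e : (c ^ i * b ^ j) ^ (3:ℕ) = (c ^ i) ^ (3:ℕ) * (b ^ j) ^ (3:ℕ) :=
          Commute.mul_pow (hCcb.zpow_zpow i j) 3
        have ec : (c ^ i) ^ (3:ℕ) = 1 := by
          rw [← zpow_natCast (c ^ i), ← zpow_mul, mul_comm, zpow_mul]
          rw [show c ^ ((3:ℕ):ℤ) = c ^ (3:ℕ) from zpow_natCast c 3, hc3, one_zpow]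
        have eb : (b ^ j) ^ (3:ℕ) = 1 := by
          rw [← zpow_natCast (b ^ j), ← zpow_mul, mul_comm, zpow_mul]
          rw [show b ^ ((3:ℕ):ℤ) = b ^ (3:ℕ) from zpow_natCast b 3, hb3, one_zpow]
        rw [ec, eb, one_mul] at e
        calc a ^ (k * 3) = (a ^ k) ^ (3:ℕ) := by
              rw [← zpow_natCast (a ^ k), ← zpow_mul]; norm_num
        _ = (c ^ i * b ^ j) ^ (3:ℕ) := by rw [hij]
        _ = 1 := e
      have hdvd : ((orderOf a : ℕ) : ℤ) ∣ k * 3 := orderOf_dvd_iff_zpow_eq_one.mpr hcube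
      rw [horda, ← hpowM3] at hdvd
      push_cast at hdvd
      exact (mul_dvd_mul_iff_right (by norm_num : (3:ℤ) ≠ 0)).mp hdvd
    · rintro ⟨t, rfl⟩
      refine (hmemHs _).mpr ⟨t, 0, ?_⟩
      rw [zpow_zero, mul_one, zpow_mul, zpow_natCast, ← hc]
  -- basic sets are in S
  have hmemS : ∀ Z ∈ ({Z0, Z1, Z2, Z3, Z4, Z5} : Set (Set G)), Z ∈ S := by
    intro Z hZ
    rw [hS]
    exact Set.mem_union_left _ (Set.mem_union_left _ (Set.mem_union_left _ hZ))
  have hZ0S : Z0 ∈ S := hmemS Z0 (by simp)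
  have hZ1S : Z1 ∈ S := hmemS Z1 (by simp)
  have hZ2S : Z2 ∈ S := hmemS Z2 (by simp)
  have hZ3S : Z3 ∈ S := hmemS Z3 (by simp)
  have hZ4S : Z4 ∈ S := hmemS Z4 (by simp)
  have hZ5S : Z5 ∈ S := hmemS Z5 (by simp)
  -- Hs = Z0 ∪ Z1 ∪ Z2 ∪ Z3
  have hcz : ∀ i : ℤ, c ^ i = 1 ∨ c ^ i = c ∨ c ^ i = c ^ 2 := zpow3 c hc3
  have hbz : ∀ j : ℤ, b ^ j = 1 ∨ b ^ j = b ∨ b ^ j = b ^ 2 := zpow3 b hb3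
  have hz2 : ∀ x : G, x ^ (2:ℤ) = x ^ (2:ℕ) := fun x => by
    rw [show (2:ℤ) = ((2:ℕ):ℤ) by norm_num, zpow_natCast]
  have hHsZ : Hs = Z0 ∪ Z1 ∪ Z2 ∪ Z3 := by
    ext x
    constructor
    · intro hx
      obtain ⟨i, j, rfl⟩ := (hmemHs x).mp hx
      rcases hcz i with h | h | h <;> rcases hbz j with h' | h' | h' <;> rw [h, h'] <;>
        simp only [hZ0, hZ1, hZ2, hZ3, Set.mem_union, Set.mem_insert_iff,
          Set.mem_singleton_iff, one_mul, mul_one] <;> tauto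
    · intro hx
      rcases hx with ((hx | hx) | hx) | hx
      · rw [hZ0] at hx; rcases hx with rfl
        exact hone_mem
      · rw [hZ1] at hx; rcases hx with rfl | hx
        · exact (hmemHs _).mpr ⟨0, 1, by simp⟩
        · rcases hx with rfl
          exact (hmemHs _).mpr ⟨0, 2, by simp [hz2]⟩
      · rw [hZ2] at hx; rcases hx with rfl | hx
        · exact (hmemHs _).mpr ⟨1, 0, by simp⟩
        · rcases hx with rfl
          exact (hmemHs _).mpr ⟨2, 0, by simp [hz2]⟩
      · rw [hZ3] at hx; rcases hx with rfl | rfl | rfl | hx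
        · exact (hmemHs _).mpr ⟨1, 1, by simp⟩
        · exact (hmemHs _).mpr ⟨1, 2, by simp [hz2]⟩
        · exact (hmemHs _).mpr ⟨2, 1, by simp [hz2]⟩
        · rcases hx with rfl
          exact (hmemHs _).mpr ⟨2, 2, by simp [hz2]⟩
  -- f and its properties
  intro f hf
  obtain ⟨hf1, hfX⟩ := hf
  have frel_H : ∀ g h : G, (h * g⁻¹ ∈ Hs ↔ f h * (f g)⁻¹ ∈ Hs) := by
    intro g h
    rw [hHsZ]
    simp only [Set.mem_union]
    rw [hfX Z0 hZ0S g h, hfX Z1 hZ1S g h, hfX Z2 hZ2S g h, hfX Z3 hZ3S g h]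
  -- the "adjacent cosets" set K
  set K : Set G := a • Hs ∪ a⁻¹ • Hs with hK
  have hZ4K : Z4 ⊆ K := by
    rw [hZ4, hK]
    apply Set.union_subset_union <;> apply Set.smul_set_mono <;> intro x hx
    · rcases hx with rfl | rfl | hx
      · exact hone_mem
      · exact (hmemHs _).mpr ⟨1, 1, by simp⟩
      · rcases hx with rfl
        exact (hmemHs _).mpr ⟨2, 2, by simp [hz2]⟩
    · rcases hx with rfl | rfl | hx
      · exact hone_mem
      · exact (hmemHs _).mpr ⟨2, 1, by simp [hz2]⟩
      · rcases hx with rfl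
        exact (hmemHs _).mpr ⟨1, 2, by simp [hz2]⟩
  have hKZ45 : Z4 ∪ Z5 = K := by
    rw [hZ5]
    exact Set.union_diff_cancel hZ4K
  have frel_K : ∀ g h : G, (h * g⁻¹ ∈ K ↔ f h * (f g)⁻¹ ∈ K) := by
    intro g h
    rw [← hKZ45]
    simp only [Set.mem_union]
    rw [hfX Z4 hZ4S g h, hfX Z5 hZ5S g h]
  -- coset machinery
  have memP : ∀ g x : G, x ∈ g • Hs ↔ x * g⁻¹ ∈ Hs := by
    intro g x
    rw [Set.mem_smul_set_iff_inv_smul_mem, smul_eq_mul]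
    constructor
    · intro h
      have h2 := hconj_mem g _ h
      have e : g * (g⁻¹ * x) * g⁻¹ = x * g⁻¹ := by group
      rwa [e] at h2
    · intro h
      have h2 := hconj_mem g⁻¹ _ h
      have e : g⁻¹ * (x * g⁻¹) * g⁻¹⁻¹ = g⁻¹ * x := by group
      rwa [e] at h2
  have hsame : ∀ g x y : G, x ∈ g • Hs → y ∈ g • Hs → x * y⁻¹ ∈ Hs := by
    intro g x y hx hy
    have h1 := (memP g x).mp hx
    have h2 := (memP g y).mp hy
    have h3 := hmul_mem _ h1 _ (hinv_mem _ h2)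
    have e : x * g⁻¹ * (y * g⁻¹)⁻¹ = x * y⁻¹ := by group
    rwa [e] at h3
  have hsmulH : ∀ u ∈ Hs, u • Hs = Hs := by
    intro u hu
    ext y
    rw [Set.mem_smul_set_iff_inv_smul_mem, smul_eq_mul]
    constructor
    · intro h
      have h2 := hmul_mem u hu _ h
      have e : u * (u⁻¹ * y) = y := by group
      rwa [e] at h2
    · intro h
      exact hmul_mem _ (hinv_mem _ hu) _ h
  have hcoset_eq : ∀ g x : G, x ∈ g • Hs → x • Hs = g • Hs := by
    intro g x hx
    obtain ⟨u, hu, hxe⟩ := hx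
    have hx2 : x = g * u := by rw [← hxe]; rfl
    rw [hx2, mul_smul, hsmulH u hu]
  have L1a : ∀ i j : ℤ, ∀ x : G, x ∈ a ^ i • Hs → x ∈ a ^ j • Hs → (M:ℤ) ∣ i - j := by
    intro i j x hi hj
    have p := (memP _ _).mp hi
    have q := (memP _ _).mp hj
    have w := hmul_mem _ (hinv_mem _ p) _ q
    have e : (x * (a ^ i)⁻¹)⁻¹ * (x * (a ^ j)⁻¹) = a ^ (i - j) := by
      rw [zpow_sub]; group
    rw [e] at w
    exact (hak _).mp w
  have L1b : ∀ i j : ℤ, (M:ℤ) ∣ i - j → a ^ i • Hs = a ^ j • Hs := by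
    intro i j hd
    have e : a ^ i = a ^ j * a ^ (i - j) := by
      rw [← zpow_add]; congr 1; ring
    rw [e, mul_smul, hsmulH _ ((hak _).mpr hd)]
  have hcover : ∀ g : G, ∃ i : ℤ, g ∈ a ^ i • Hs := by
    intro g
    have hg : g ∈ Subgroup.closure ({a, b} : Set G) := by rw [hgen]; trivial
    refine Subgroup.closure_induction (p := fun x _ => ∃ i : ℤ, x ∈ a ^ i • Hs)
      ?_ ?_ ?_ ?_ hg
    · intro x hx
      simp only [Set.mem_insert_iff, Set.mem_singleton_iff] at hx
      rcases hx with h | h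
      · refine ⟨1, ?_⟩
        rw [h]
        exact (memP _ _).mpr (by rw [zpow_one]; simpa using hone_mem)
      · refine ⟨0, (memP _ _).mpr ?_⟩
        rw [h, zpow_zero, inv_one, mul_one]
        exact (hmemHs b).mpr ⟨0, 1, by simp⟩
    · exact ⟨0, (memP _ _).mpr (by simpa using hone_mem)⟩
    · rintro x y _ _ ⟨i, hx⟩ ⟨j, hy⟩
      refine ⟨i + j, (memP _ _).mpr ?_⟩
      have u := (memP _ _).mp hx
      have v := (memP _ _).mp hy
      have e : x * y * (a ^ (i + j))⁻¹
          = (x * (a ^ i)⁻¹) * (a ^ i * (y * (a ^ j)⁻¹) * (a ^ i)⁻¹) := by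
        rw [zpow_add]; group
      rw [e]
      exact hmul_mem _ u _ (hconj_mem _ _ v)
    · rintro x _ ⟨i, hx⟩
      refine ⟨-i, (memP _ _).mpr ?_⟩
      have u := (memP _ _).mp hx
      have e : x⁻¹ * (a ^ (-i))⁻¹
          = (a ^ i)⁻¹ * (x * (a ^ i)⁻¹)⁻¹ * ((a ^ i)⁻¹)⁻¹ := by
        rw [zpow_neg]; group
      rw [e]
      exact hconj_mem _ _ (hinv_mem _ u)
  -- image of cosets under f
  have fimage : ∀ g : G, (⇑f) '' (g • Hs) = f g • Hs := by
    intro g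
    ext y
    constructor
    · rintro ⟨x, hx, rfl⟩
      exact (memP _ _).mpr ((frel_H g x).mp ((memP g x).mp hx))
    · intro hy
      refine ⟨f.symm y, ?_, f.apply_symm_apply y⟩
      apply (memP g _).mpr
      have h2 : f (f.symm y) * (f g)⁻¹ ∈ Hs := by
        rw [Equiv.apply_symm_apply]; exact (memP _ _).mp hy
      exact (frel_H g (f.symm y)).mpr h2
  -- the coset index function along powers of a
  have hψex : ∀ i : ℕ, ∃ j : ℤ, f (a ^ i) ∈ a ^ j • Hs := fun i => hcover _
  choose ψ hψ using hψex
  have hself : ∀ k : ℤ, (a : G) ^ k ∈ a ^ k • Hs :=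
    fun k => (memP _ _).mpr (by simpa using hone_mem)
  have h0 : (M:ℤ) ∣ ψ 0 := by
    have h1mem : f ((a : G) ^ (0:ℕ)) ∈ a ^ (0:ℤ) • Hs := by
      rw [pow_zero, hf1, zpow_zero]
      apply (memP _ _).mpr
      simpa using hone_mem
    have h00 := L1a (ψ 0) 0 _ (hψ 0) h1mem
    rwa [sub_zero] at h00
  have hadj : ∀ i : ℕ, (M:ℤ) ∣ (ψ (i+1) - ψ i - 1) ∨ (M:ℤ) ∣ (ψ (i+1) - ψ i + 1) := by
    intro i
    have haK : a ^ (i+1) * (a ^ i)⁻¹ ∈ K := by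
      have e : a ^ (i+1) * (a ^ i)⁻¹ = a := by rw [pow_succ']; group
      rw [e]
      exact Or.inl ((memP _ _).mpr (by simpa using hone_mem))
    have hrelK := (frel_K (a ^ i) (a ^ (i+1))).mp haK
    have hq : f (a ^ (i+1)) * (f (a ^ i))⁻¹ ∈ a ^ (ψ (i+1) - ψ i) • Hs := by
      have p1 := (memP _ _).mp (hψ (i+1))
      have p2 := (memP _ _).mp (hψ i)
      apply (memP _ _).mpr
      have e : f (a ^ (i+1)) * (f (a ^ i))⁻¹ * (a ^ (ψ (i+1) - ψ i))⁻¹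
          = (f (a ^ (i+1)) * (a ^ ψ (i+1))⁻¹) *
            (a ^ (ψ (i+1) - ψ i) * (f (a ^ i) * (a ^ ψ i)⁻¹)⁻¹ * (a ^ (ψ (i+1) - ψ i))⁻¹) := by
        rw [zpow_sub]; group
      rw [e]
      exact hmul_mem _ p1 _ (hconj_mem _ _ (hinv_mem _ p2))
    rcases hrelK with hl | hr
    · left
      have hl' : f (a ^ (i+1)) * (f (a ^ i))⁻¹ ∈ a ^ (1:ℤ) • Hs := by
        rw [zpow_one]; exact hl
      exact L1a _ 1 _ hq hl'
    · right
      have hr' : f (a ^ (i+1)) * (f (a ^ i))⁻¹ ∈ a ^ (-1:ℤ) • Hs := by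
        rw [zpow_neg_one]; exact hr
      have := L1a _ (-1) _ hq hr'
      rwa [sub_neg_eq_add] at this
  have hinj : ∀ i j : ℕ, (M:ℤ) ∣ (ψ i - ψ j) → (M:ℤ) ∣ ((i:ℤ) - (j:ℤ)) := by
    intro i j hd
    have heq := L1b _ _ hd
    have h1 : f (a ^ i) ∈ a ^ (ψ j) • Hs := heq ▸ hψ i
    have h2 : f (a ^ i) * (f (a ^ j))⁻¹ ∈ Hs := hsame _ _ _ h1 (hψ j)
    have h3 : (a : G) ^ i * ((a : G) ^ j)⁻¹ ∈ Hs := (frel_H _ _).mpr h2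
    have h4 : (a : G) ^ ((i:ℤ) - (j:ℤ)) ∈ Hs := by
      rw [zpow_sub, zpow_natCast, zpow_natCast]; exact h3
    exact (hak _).mp h4
  have hM3 : (3:ℤ) ≤ (M:ℤ) := by exact_mod_cast (by omega : 3 ≤ M)
  obtain ⟨ε, hε, hψlin⟩ := psi_lin (M:ℤ) hM3 ψ h0 hadj hinj
  have hmain : ∀ i : ℤ, (⇑f) '' (a ^ i • Hs) = a ^ (ε * i) • Hs := by
    intro i
    set i' : ℕ := (i % (M:ℤ)).toNat with hi'
    have hMne : (M:ℤ) ≠ 0 := by exact_mod_cast hMpos.ne'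
    have hcasti : ((i':ℕ):ℤ) = i % (M:ℤ) :=
      Int.toNat_of_nonneg (Int.emod_nonneg i hMne)
    have hd : (M:ℤ) ∣ i - (i':ℤ) := by
      rw [hcasti]
      exact ⟨i / (M:ℤ), by linarith [Int.mul_ediv_add_emod i (M:ℤ)]⟩
    obtain ⟨u, hu⟩ := hψlin i'
    obtain ⟨v, hv⟩ := hd
    calc (⇑f) '' (a ^ i • Hs) = (⇑f) '' (a ^ ((i':ℕ):ℤ) • Hs) := by
          rw [L1b i (i':ℤ) ⟨v, hv⟩]
    _ = (⇑f) '' ((a ^ (i' : ℕ)) • Hs) := by rw [zpow_natCast]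
    _ = f (a ^ (i' : ℕ)) • Hs := fimage _
    _ = a ^ (ψ i') • Hs := hcoset_eq _ _ (hψ i')
    _ = a ^ (ε * i) • Hs := L1b _ _ ⟨u - ε * v, by linear_combination hu - ε * hv⟩
  rcases hε with rfl | rfl
  · refine Or.inl ⟨?_, ?_⟩
    · intro g
      obtain ⟨i, hg⟩ := hcover g
      have h1 : g • Hs = a ^ i • Hs := hcoset_eq _ _ hg
      rw [h1, hmain i, one_mul]
    · intro hB
      have heq : a ^ ((1:ℤ) * 1) • Hs = a ^ (-1:ℤ) • Hs := (hmain 1).symm.trans (hB 1)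
      have hx2 : (a : G) ^ ((1:ℤ) * 1) ∈ a ^ (-1:ℤ) • Hs := by
        rw [← heq]; exact hself _
      have := L1a ((1:ℤ) * 1) (-1) _ (hself _) hx2
      rw [show ((1:ℤ) * 1 - (-1) : ℤ) = 2 by norm_num] at this
      exact hnotdvd2 this
  · refine Or.inr ⟨?_, ?_⟩
    · intro i
      have := hmain i
      rwa [neg_one_mul] at this
    · intro hA
      have heq : a ^ ((-1:ℤ) * 1) • Hs = a ^ (1:ℤ) • Hs := (hmain 1).symm.trans (hA (a ^ (1:ℤ)))
      have hx2 : (a : G) ^ ((-1:ℤ) * 1) ∈ a ^ (1:ℤ) • Hs := by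
        rw [← heq]; exact hself _
      have := L1a ((-1:ℤ) * 1) 1 _ (hself _) hx2
      rw [show ((-1:ℤ) * 1 - 1 : ℤ) = -2 by norm_num, dvd_neg] at this
      exact hnotdvd2 this
end

section
/- Let n ≥ 4, G = M_{3^n}, c = a^{3^{n-2}}, C = ⟨c⟩, B = ⟨b⟩, H = C×B, and let 𝒜 be the S-ring over G whose basic sets are Z₀ = {e}, Z₁ = {b, b²}, Z₂ = {c, c²}, Z₃ = {cb, cb², c²b, c²b²}, Z₄ = a{e, cb, c²b²} ∪ a⁻¹{e, c²b, cb²}, Z₅ = (aH ∪ a⁻¹H) \ Z₄, X_k = a^{3k}C ∪ a^{-3k}C and Y_k = (a^{3k}H ∪ a^{-3k}H) \ X_k for k = 1,…,(3^{n-3}−1)/2, and T_j = a^jH ∪ a^{-j}H for 2 ≤ j ≤ (3^{n-2}−1)/2 with 3 ∤ j. If 𝒜 is schurian with K = Aut(𝒜), then K acts on Z₃ as the Klein four-group; that is, the restriction to H of every element of K is one of the following four permutations of H: the identity; (b,b²)(cb,cb²)(c²b,c²b²); (c,c²)(cb,c²b)(cb²,c²b²); (c,c²)(b,b²)(cb,c²b²)(cb²,c²b).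 -/
open scoped Pointwise

lemma cube_zpowers {G : Type*} [Group G] {g : G} (h : g ^ 3 = 1) :
    ∀ x ∈ Subgroup.zpowers g, x = 1 ∨ x = g ∨ x = g ^ 2 := by
  intro x hx
  obtain ⟨k, rfl⟩ := Subgroup.mem_zpowers_iff.mp hx
  have hz : g ^ (3 : ℤ) = 1 := by
    rw [show (3 : ℤ) = ((3 : ℕ) : ℤ) by norm_num, zpow_natCast, h]
  have h1 : g ^ k = g ^ (k % 3) := by
    conv_lhs => rw [← Int.emod_add_mul_ediv k 3]
    rw [zpow_add, zpow_mul, hz, one_zpow, mul_one]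
  have h2 : k % 3 = 0 ∨ k % 3 = 1 ∨ k % 3 = 2 := by omega
  rcases h2 with h2 | h2 | h2
  · left; rw [h1, h2, zpow_zero]
  · right; left; rw [h1, h2, zpow_one]
  · right; right
    rw [h1, h2, show (2 : ℤ) = ((2 : ℕ) : ℤ) by norm_num, zpow_natCast]
/-- If the S-ring `𝒜` over `M_{3^n}` (`n ≥ 4`) is schurian, then `K = Aut(𝒜)` acts on
`Z₃` as the Klein four-group: the restriction of each `f ∈ K` to `H` is one of four
explicit permutations. -/
theorem M3n_aut_on_H
    (n : ℕ) (hn : 4 ≤ n) {G : Type*} [Group G] [Finite G] (a b c : G)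
    (hcard : Nat.card G = 3 ^ n) (ha : a ^ (3 ^ (n - 1)) = 1) (hb3 : b ^ 3 = 1)
    (hab : b⁻¹ * a * b = a ^ (3 ^ (n - 2) + 1))
    (hgen : Subgroup.closure {a, b} = ⊤)
    (hc : c = a ^ (3 ^ (n - 2)))
    (Cs Bs Hs : Set G)
    (hCs : Cs = (Subgroup.zpowers c : Set G))
    (hBs : Bs = (Subgroup.zpowers b : Set G))
    (hHs : Hs = Cs * Bs)
    (Z0 Z1 Z2 Z3 Z4 Z5 : Set G) (Xk Yk Tj : ℕ → Set G) (S : Set (Set G))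
    (hZ0 : Z0 = {1}) (hZ1 : Z1 = {b, b ^ 2}) (hZ2 : Z2 = {c, c ^ 2})
    (hZ3 : Z3 = {c * b, c * b ^ 2, c ^ 2 * b, c ^ 2 * b ^ 2})
    (hZ4 : Z4 = a • ({1, c * b, c ^ 2 * b ^ 2} : Set G) ∪
        a⁻¹ • ({1, c ^ 2 * b, c * b ^ 2} : Set G))
    (hZ5 : Z5 = (a • Hs ∪ a⁻¹ • Hs) \ Z4)
    (hXk : ∀ k, Xk k = a ^ (3 * k) • Cs ∪ (a ^ (3 * k))⁻¹ • Cs)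
    (hYk : ∀ k, Yk k = (a ^ (3 * k) • Hs ∪ (a ^ (3 * k))⁻¹ • Hs) \ Xk k)
    (hTj : ∀ j, Tj j = a ^ j • Hs ∪ (a ^ j)⁻¹ • Hs)
    (hS : S = {Z0, Z1, Z2, Z3, Z4, Z5}
      ∪ {W | ∃ k : ℕ, 1 ≤ k ∧ k ≤ (3 ^ (n - 3) - 1) / 2 ∧ W = Xk k}
      ∪ {W | ∃ k : ℕ, 1 ≤ k ∧ k ≤ (3 ^ (n - 3) - 1) / 2 ∧ W = Yk k}
      ∪ {W | ∃ j : ℕ, 2 ≤ j ∧ j ≤ (3 ^ (n - 2) - 1) / 2 ∧ ¬ (3 ∣ j) ∧ W = Tj j})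
    (hSR : IsSRing G S) (hSch : IsSchurian G S) :
    ∀ f ∈ srAut S,
      (∀ x ∈ Hs, f x = x) ∨
      (f 1 = 1 ∧ f b = b ^ 2 ∧ f (b ^ 2) = b ∧ f c = c ∧ f (c ^ 2) = c ^ 2 ∧
        f (c * b) = c * b ^ 2 ∧ f (c * b ^ 2) = c * b ∧
        f (c ^ 2 * b) = c ^ 2 * b ^ 2 ∧ f (c ^ 2 * b ^ 2) = c ^ 2 * b) ∨
      (f 1 = 1 ∧ f b = b ∧ f (b ^ 2) = b ^ 2 ∧ f c = c ^ 2 ∧ f (c ^ 2) = c ∧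
        f (c * b) = c ^ 2 * b ∧ f (c ^ 2 * b) = c * b ∧
        f (c * b ^ 2) = c ^ 2 * b ^ 2 ∧ f (c ^ 2 * b ^ 2) = c * b ^ 2) ∨
      (f 1 = 1 ∧ f b = b ^ 2 ∧ f (b ^ 2) = b ∧ f c = c ^ 2 ∧ f (c ^ 2) = c ∧
        f (c * b) = c ^ 2 * b ^ 2 ∧ f (c ^ 2 * b ^ 2) = c * b ∧
        f (c * b ^ 2) = c ^ 2 * b ∧ f (c ^ 2 * b) = c * b ^ 2) := by
  intro f hf
  obtain ⟨hf1, hfrel⟩ := hf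
  have hinj : Function.Injective f := f.injective
  -- Z1, Z2 are basic sets
  have hZ1S : Z1 ∈ S := by
    rw [hS]
    exact Set.mem_union_left _ (Set.mem_union_left _ (Set.mem_union_left _ (by simp)))
  have hZ2S : Z2 ∈ S := by
    rw [hS]
    exact Set.mem_union_left _ (Set.mem_union_left _ (Set.mem_union_left _ (by simp)))
  -- ### group-theoretic facts about M_{3^n}
  have hbbb : b * b * b = 1 := by
    have h : b ^ 3 = b * b * b := by rw [pow_succ, pow_succ, pow_one]
    rw [← h]; exact hb3
  have hbinv : b⁻¹ = b * b := by
    apply inv_eq_of_mul_eq_one_right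
    rw [← mul_assoc]; exact hbbb
  have hbinv2 : b⁻¹ * b⁻¹ = b := by
    calc b⁻¹ * b⁻¹ = (b * b) * (b * b) := by rw [hbinv]
      _ = (b * b * b) * b := by group
      _ = b := by rw [hbbb, one_mul]
  set m : ℕ := 3 ^ (n - 2) + 1 with hm
  have haA : a ∈ Subgroup.zpowers a := Subgroup.mem_zpowers a
  have hconjk : ∀ k : ℕ, b⁻¹ * a ^ k * b = a ^ (m * k) := by
    intro k
    have h1 := conj_pow (i := k) (a := b⁻¹) (b := a)
    rw [inv_inv] at h1
    rw [← h1, hab, ← pow_mul]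
  have hconjz : ∀ k : ℤ, b⁻¹ * a ^ k * b = (a ^ m) ^ k := by
    intro k
    have h1 := conj_zpow (i := k) (a := b⁻¹) (b := a)
    rw [inv_inv] at h1
    rw [← h1, hab]
  have hstep : b⁻¹ * (b⁻¹ * a * b) * b = b * a * b⁻¹ := by
    calc b⁻¹ * (b⁻¹ * a * b) * b = (b⁻¹ * b⁻¹) * a * (b * b) := by group
      _ = b * a * b⁻¹ := by rw [hbinv2, ← hbinv]
  have hba : b * a * b⁻¹ = (a ^ m) ^ m := by
    rw [← hstep, hab, hconjk m, pow_mul]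
  have hconjz' : ∀ k : ℤ, b * a ^ k * b⁻¹ = ((a ^ m) ^ m) ^ k := by
    intro k
    have h1 := conj_zpow (i := k) (a := b) (b := a)
    rw [← h1, hba]
  have hconj_mem : ∀ x ∈ Subgroup.zpowers a, b⁻¹ * x * b ∈ Subgroup.zpowers a := by
    rintro x ⟨k, rfl⟩
    rw [hconjz k]
    exact zpow_mem (pow_mem haA m) k
  have hconj_mem' : ∀ x ∈ Subgroup.zpowers a, b * x * b⁻¹ ∈ Subgroup.zpowers a := by
    rintro x ⟨k, rfl⟩
    rw [hconjz' k]
    exact zpow_mem (pow_mem (pow_mem haA m) m) k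
  have hnormal : (Subgroup.zpowers a).Normal := by
    rw [← Subgroup.normalizer_eq_top_iff]
    apply le_antisymm le_top
    rw [← hgen, Subgroup.closure_le]
    intro x hx
    simp only [Set.mem_insert_iff, Set.mem_singleton_iff] at hx
    rcases hx with rfl | rfl
    · exact Subgroup.le_normalizer haA
    · rw [SetLike.mem_coe, Subgroup.mem_normalizer_iff]
      intro h
      constructor
      · intro hh; exact hconj_mem' h hh
      · intro hh
        have h2 := hconj_mem _ hh
        have h3 : x⁻¹ * (x * h * x⁻¹) * x = h := by group
        rwa [h3] at h2
  haveI := hnormal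
  set π := QuotientGroup.mk' (Subgroup.zpowers a) with hπ
  have hπa : π a = 1 := (QuotientGroup.eq_one_iff a).mpr haA
  have htop : Subgroup.zpowers (π b) = ⊤ := by
    apply le_antisymm le_top
    have h1 : Subgroup.map π ⊤ = ⊤ :=
      Subgroup.map_top_of_surjective π (QuotientGroup.mk'_surjective _)
    rw [← hgen, MonoidHom.map_closure] at h1
    rw [← h1, Subgroup.closure_le]
    rintro y ⟨x, hx, rfl⟩
    simp only [Set.mem_insert_iff, Set.mem_singleton_iff] at hx
    rcases hx with rfl | rfl
    · rw [SetLike.mem_coe, hπa]; exact one_mem _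
    · exact Subgroup.mem_zpowers _
  have hq : Nat.card (G ⧸ Subgroup.zpowers a) = orderOf (π b) := by
    rw [← Subgroup.card_top, ← htop, Nat.card_zpowers]
  have hq3 : orderOf (π b) ∣ 3 :=
    orderOf_dvd_of_pow_eq_one (by rw [← map_pow, hb3, map_one])
  have hoa : orderOf a ∣ 3 ^ (n - 1) := orderOf_dvd_of_pow_eq_one ha
  have hcount : (3 : ℕ) ^ n = Nat.card (G ⧸ Subgroup.zpowers a) * orderOf a := by
    rw [← hcard, ← Nat.card_zpowers]
    exact Subgroup.card_eq_card_quotient_mul_card_subgroup _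
  have hM : (0 : ℕ) < 3 ^ (n - 1) := pow_pos (by norm_num) _
  have h3pos : (0 : ℕ) < 3 ^ n := pow_pos (by norm_num) _
  have hopos : 0 < orderOf a := by
    rcases Nat.eq_zero_or_pos (orderOf a) with h | h
    · rw [h, mul_zero] at hcount; omega
    · exact h
  have hole : orderOf a ≤ 3 ^ (n - 1) := Nat.le_of_dvd hM hoa
  have hqle : orderOf (π b) ≤ 3 := Nat.le_of_dvd (by norm_num) hq3
  have h3n : (3 : ℕ) ^ n = 3 * 3 ^ (n - 1) := by
    rw [← pow_succ']; congr 1; omega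
  have h5 : 3 * 3 ^ (n - 1) = orderOf (π b) * orderOf a := by
    rw [← h3n, hcount, hq]
  have horda : orderOf a = 3 ^ (n - 1) := by
    apply le_antisymm hole
    have h6 : orderOf (π b) * orderOf a ≤ 3 * orderOf a :=
      Nat.mul_le_mul_right _ hqle
    rw [← h5] at h6
    exact Nat.le_of_mul_le_mul_left h6 (by norm_num)
  have hqeq3 : orderOf (π b) = 3 := by
    rw [horda] at h5
    exact (Nat.eq_of_mul_eq_mul_right hM h5.symm)
  have hbA : b ∉ Subgroup.zpowers a := by
    intro hb
    have h1 : π b = 1 := (QuotientGroup.eq_one_iff b).mpr hb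
    rw [h1, orderOf_one] at hqeq3
    norm_num at hqeq3
  have hb2A : b ^ 2 ∉ Subgroup.zpowers a := by
    intro hb
    apply hbA
    have h4 : (b ^ 2) ^ 2 = b := by
      rw [← pow_mul, show 2 * 2 = 3 + 1 from rfl, pow_succ, hb3, one_mul]
    exact h4 ▸ pow_mem hb 2
  have hc3 : c ^ 3 = 1 := by
    rw [hc, ← pow_mul, show 3 ^ (n - 2) * 3 = 3 ^ (n - 1) by rw [← pow_succ]; congr 1; omega]
    exact ha
  have hcA : c ∈ Subgroup.zpowers a := by rw [hc]; exact pow_mem haA _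
  have hc1 : c ≠ 1 := by
    intro h
    have h2 : orderOf a ∣ 3 ^ (n - 2) := orderOf_dvd_of_pow_eq_one (by rw [← hc]; exact h)
    rw [horda] at h2
    have h3 := Nat.le_of_dvd (pow_pos (by norm_num) _) h2
    have h4 : (3 : ℕ) ^ (n - 2) < 3 ^ (n - 1) := Nat.pow_lt_pow_right (by norm_num) (by omega)
    omega
  haveI : Fact (Nat.Prime 3) := ⟨by norm_num⟩
  have hb1 : b ≠ 1 := fun h => hbA (h ▸ one_mem _)
  have hordb : orderOf b = 3 := orderOf_eq_prime hb3 hb1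
  have hordc : orderOf c = 3 := orderOf_eq_prime hc3 hc1
  have hcbc : b⁻¹ * c * b = c := by
    rw [hc, hconjk]
    have hE : m * 3 ^ (n - 2) = 3 ^ (n - 1) * 3 ^ (n - 3) + 3 ^ (n - 2) := by
      rw [hm, add_mul, one_mul, ← pow_add, ← pow_add]
      congr 2
      omega
    rw [hE, pow_add, pow_mul, ha, one_pow, one_mul]
  have hK : Commute b c := by
    have h3 : b * (b⁻¹ * c * b) = c * b := by
      rw [← mul_assoc, ← mul_assoc, mul_inv_cancel, one_mul]
    rw [hcbc] at h3
    exact h3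
  -- ### distinctness of the elements c^e * b^d
  have key : ∀ e1 d1 e2 d2 : ℕ, e1 < 3 → d1 < 3 → e2 < 3 → d2 < 3 →
      c ^ e1 * b ^ d1 = c ^ e2 * b ^ d2 → e1 = e2 ∧ d1 = d2 := by
    intro e1 d1 e2 d2 he1 hd1 he2 hd2 h
    have h2 : b ^ d1 * (b ^ d2)⁻¹ = (c ^ e1)⁻¹ * c ^ e2 := by
      apply mul_left_cancel (a := c ^ e1)
      calc c ^ e1 * (b ^ d1 * (b ^ d2)⁻¹) = (c ^ e1 * b ^ d1) * (b ^ d2)⁻¹ :=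
            (mul_assoc _ _ _).symm
        _ = (c ^ e2 * b ^ d2) * (b ^ d2)⁻¹ := by rw [h]
        _ = c ^ e2 := mul_inv_cancel_right _ _
        _ = c ^ e1 * ((c ^ e1)⁻¹ * c ^ e2) := (mul_inv_cancel_left _ _).symm
    have hxb : b ^ d1 * (b ^ d2)⁻¹ ∈ Subgroup.zpowers b :=
      mul_mem (pow_mem (Subgroup.mem_zpowers b) _) (inv_mem (pow_mem (Subgroup.mem_zpowers b) _))
    have hxA : b ^ d1 * (b ^ d2)⁻¹ ∈ Subgroup.zpowers a := by
      rw [h2]; exact mul_mem (inv_mem (pow_mem hcA _)) (pow_mem hcA _)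
    have hbd : b ^ d1 = b ^ d2 := by
      rcases cube_zpowers hb3 _ hxb with h1 | h1 | h1
      · exact mul_inv_eq_one.mp h1
      · rw [h1] at hxA; exact absurd hxA hbA
      · rw [h1] at hxA; exact absurd hxA hb2A
    have hce : c ^ e1 = c ^ e2 := by rw [hbd] at h; exact mul_right_cancel h
    constructor
    · have h4 := pow_eq_pow_iff_modEq.mp hce
      rw [hordc] at h4
      have h5 : e1 % 3 = e2 % 3 := h4
      omega
    · have h4 := pow_eq_pow_iff_modEq.mp hbd
      rw [hordb] at h4
      have h5 : d1 % 3 = d2 % 3 := h4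
      omega
  have hbb2 : b ≠ b ^ 2 := by
    intro h
    have h2 := key 0 1 0 2 (by norm_num) (by norm_num) (by norm_num) (by norm_num)
      (by simpa using h)
    omega
  have hcc2 : c ≠ c ^ 2 := by
    intro h
    have h2 := key 1 0 2 0 (by norm_num) (by norm_num) (by norm_num) (by norm_num)
      (by simpa using h)
    omega
  -- ### the action of f
  have hfix : ∀ X ∈ S, ∀ h : G, h ∈ X ↔ f h ∈ X := by
    intro X hX h
    simpa [hf1] using hfrel X hX 1 h
  have hfbZ : f b = b ∨ f b = b ^ 2 := by
    have h1 := (hfix Z1 hZ1S b).mp (by rw [hZ1]; exact Set.mem_insert _ _)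
    rw [hZ1] at h1; simpa using h1
  have hfcZ : f c = c ∨ f c = c ^ 2 := by
    have h1 := (hfix Z2 hZ2S c).mp (by rw [hZ2]; exact Set.mem_insert _ _)
    rw [hZ2] at h1; simpa using h1
  have hfb2Z : f (b ^ 2) = b ∨ f (b ^ 2) = b ^ 2 := by
    have h1 := (hfix Z1 hZ1S (b ^ 2)).mp (by rw [hZ1]; simp)
    rw [hZ1] at h1; simpa using h1
  have hfc2Z : f (c ^ 2) = c ∨ f (c ^ 2) = c ^ 2 := by
    have h1 := (hfix Z2 hZ2S (c ^ 2)).mp (by rw [hZ2]; simp)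
    rw [hZ2] at h1; simpa using h1
  have pick : ∀ (x : G) (e d : ℕ), e < 3 → d < 3 →
      (x = c ^ 1 * b ^ d ∨ x = c ^ 2 * b ^ d) →
      (x = c ^ e * b ^ 1 ∨ x = c ^ e * b ^ 2) → x = c ^ e * b ^ d := by
    intro x e d he hd h1 h2
    rcases h1 with rfl | rfl <;> rcases h2 with h | h <;>
      · obtain ⟨h3, h4⟩ := key _ _ _ _ (by omega) (by omega) (by omega) (by omega) h
        rw [h3]
  have getval : ∀ (u v : G) (e d : ℕ), e < 3 → d < 3 →
      f u = b ^ d → f v = c ^ e →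
      ∀ w : G, w * u⁻¹ ∈ Z2 → w * v⁻¹ ∈ Z1 → f w = c ^ e * b ^ d := by
    intro u v e d he hd hfu hfv w hw2 hw1
    have r2 := (hfrel Z2 hZ2S u w).mp hw2
    have r1 := (hfrel Z1 hZ1S v w).mp hw1
    rw [hfu, hZ2] at r2
    rw [hfv, hZ1] at r1
    simp only [Set.mem_insert_iff, Set.mem_singleton_iff] at r2 r1
    apply pick _ e d he hd
    · rcases r2 with h | h
      · left; rw [pow_one]; exact mul_inv_eq_iff_eq_mul.mp h
      · right; exact mul_inv_eq_iff_eq_mul.mp h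
    · rcases r1 with h | h
      · left
        calc f w = b * c ^ e := mul_inv_eq_iff_eq_mul.mp h
          _ = b ^ 1 * c ^ e := by rw [pow_one]
          _ = c ^ e * b ^ 1 := (hK.pow_pow 1 e).eq
      · right
        calc f w = b ^ 2 * c ^ e := mul_inv_eq_iff_eq_mul.mp h
          _ = c ^ e * b ^ 2 := (hK.pow_pow 2 e).eq
  have hZc : c ∈ Z2 := by rw [hZ2]; exact Set.mem_insert _ _
  have hZc2 : c ^ 2 ∈ Z2 := by rw [hZ2]; simp
  have hZb : b ∈ Z1 := by rw [hZ1]; exact Set.mem_insert _ _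
  have hZb2 : b ^ 2 ∈ Z1 := by rw [hZ1]; simp
  have m1 : (c * b) * b⁻¹ ∈ Z2 := by rw [mul_inv_cancel_right]; exact hZc
  have m2 : (c * b) * c⁻¹ ∈ Z1 := by
    rw [show c * b = b * c from hK.eq.symm, mul_inv_cancel_right]; exact hZb
  have m3 : (c * b ^ 2) * (b ^ 2)⁻¹ ∈ Z2 := by rw [mul_inv_cancel_right]; exact hZc
  have m4 : (c * b ^ 2) * c⁻¹ ∈ Z1 := by
    rw [show c * b ^ 2 = b ^ 2 * c from (hK.symm.pow_right 2).eq, mul_inv_cancel_right]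
    exact hZb2
  have m5 : (c ^ 2 * b) * b⁻¹ ∈ Z2 := by rw [mul_inv_cancel_right]; exact hZc2
  have m6 : (c ^ 2 * b) * (c ^ 2)⁻¹ ∈ Z1 := by
    rw [show c ^ 2 * b = b * c ^ 2 from (hK.pow_right 2).eq.symm, mul_inv_cancel_right]
    exact hZb
  have m7 : (c ^ 2 * b ^ 2) * (b ^ 2)⁻¹ ∈ Z2 := by rw [mul_inv_cancel_right]; exact hZc2
  have m8 : (c ^ 2 * b ^ 2) * (c ^ 2)⁻¹ ∈ Z1 := by
    rw [show c ^ 2 * b ^ 2 = b ^ 2 * c ^ 2 from (hK.pow_pow 2 2).eq.symm,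
      mul_inv_cancel_right]
    exact hZb2
  rcases hfbZ with hfb | hfb <;> rcases hfcZ with hfc | hfc
  · -- f b = b, f c = c : identity on H
    have hfb2 : f (b ^ 2) = b ^ 2 := by
      rcases hfb2Z with h | h
      · exact absurd (hinj (h.trans hfb.symm)).symm hbb2
      · exact h
    have hfc2 : f (c ^ 2) = c ^ 2 := by
      rcases hfc2Z with h | h
      · exact absurd (hinj (h.trans hfc.symm)).symm hcc2
      · exact h
    have v1 : f (c * b) = c ^ 1 * b ^ 1 :=
      getval b c 1 1 (by norm_num) (by norm_num) (by rw [pow_one]; exact hfb)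
        (by rw [pow_one]; exact hfc) _ m1 m2
    have v2 : f (c * b ^ 2) = c ^ 1 * b ^ 2 :=
      getval (b ^ 2) c 1 2 (by norm_num) (by norm_num) hfb2
        (by rw [pow_one]; exact hfc) _ m3 m4
    have v3 : f (c ^ 2 * b) = c ^ 2 * b ^ 1 :=
      getval b (c ^ 2) 2 1 (by norm_num) (by norm_num) (by rw [pow_one]; exact hfb)
        hfc2 _ m5 m6
    have v4 : f (c ^ 2 * b ^ 2) = c ^ 2 * b ^ 2 :=
      getval (b ^ 2) (c ^ 2) 2 2 (by norm_num) (by norm_num) hfb2 hfc2 _ m7 m8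
    left
    intro x hx
    rw [hHs, hCs, hBs, Set.mem_mul] at hx
    obtain ⟨u, hu, v, hv, rfl⟩ := hx
    rcases cube_zpowers hc3 u hu with rfl | rfl | rfl <;>
      rcases cube_zpowers hb3 v hv with rfl | rfl | rfl <;>
      (try simp only [one_mul, mul_one]) <;>
      first
        | exact hf1
        | exact hfb
        | exact hfb2
        | exact hfc
        | exact hfc2
        | simpa using v1
        | simpa using v2
        | simpa using v3
        | exact v4
  · -- f b = b, f c = c^2 : third disjunct
    have hfb2 : f (b ^ 2) = b ^ 2 := by
      rcases hfb2Z with h | h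
      · exact absurd (hinj (h.trans hfb.symm)).symm hbb2
      · exact h
    have hfc2 : f (c ^ 2) = c := by
      rcases hfc2Z with h | h
      · exact h
      · exact absurd (hinj (h.trans hfc.symm)).symm hcc2
    have v1 : f (c * b) = c ^ 2 * b ^ 1 :=
      getval b c 2 1 (by norm_num) (by norm_num) (by rw [pow_one]; exact hfb)
        hfc _ m1 m2
    have v2 : f (c * b ^ 2) = c ^ 2 * b ^ 2 :=
      getval (b ^ 2) c 2 2 (by norm_num) (by norm_num) hfb2 hfc _ m3 m4
    have v3 : f (c ^ 2 * b) = c ^ 1 * b ^ 1 :=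
      getval b (c ^ 2) 1 1 (by norm_num) (by norm_num) (by rw [pow_one]; exact hfb)
        (by rw [pow_one]; exact hfc2) _ m5 m6
    have v4 : f (c ^ 2 * b ^ 2) = c ^ 1 * b ^ 2 :=
      getval (b ^ 2) (c ^ 2) 1 2 (by norm_num) (by norm_num) hfb2
        (by rw [pow_one]; exact hfc2) _ m7 m8
    right; right; left
    exact ⟨hf1, hfb, hfb2, hfc, hfc2, by simpa using v1, by simpa using v3, v2,
      by simpa using v4⟩
  · -- f b = b^2, f c = c : second disjunct
    have hfb2 : f (b ^ 2) = b := by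
      rcases hfb2Z with h | h
      · exact h
      · exact absurd (hinj (h.trans hfb.symm)).symm hbb2
    have hfc2 : f (c ^ 2) = c ^ 2 := by
      rcases hfc2Z with h | h
      · exact absurd (hinj (h.trans hfc.symm)).symm hcc2
      · exact h
    have v1 : f (c * b) = c ^ 1 * b ^ 2 :=
      getval b c 1 2 (by norm_num) (by norm_num) hfb (by rw [pow_one]; exact hfc) _ m1 m2
    have v2 : f (c * b ^ 2) = c ^ 1 * b ^ 1 :=
      getval (b ^ 2) c 1 1 (by norm_num) (by norm_num) (by rw [pow_one]; exact hfb2)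
        (by rw [pow_one]; exact hfc) _ m3 m4
    have v3 : f (c ^ 2 * b) = c ^ 2 * b ^ 2 :=
      getval b (c ^ 2) 2 2 (by norm_num) (by norm_num) hfb hfc2 _ m5 m6
    have v4 : f (c ^ 2 * b ^ 2) = c ^ 2 * b ^ 1 :=
      getval (b ^ 2) (c ^ 2) 2 1 (by norm_num) (by norm_num) (by rw [pow_one]; exact hfb2)
        hfc2 _ m7 m8
    right; left
    exact ⟨hf1, hfb, hfb2, hfc, hfc2, by simpa using v1, by simpa using v2, v3,
      by simpa using v4⟩
  · -- f b = b^2, f c = c^2 : fourth disjunct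
    have hfb2 : f (b ^ 2) = b := by
      rcases hfb2Z with h | h
      · exact h
      · exact absurd (hinj (h.trans hfb.symm)).symm hbb2
    have hfc2 : f (c ^ 2) = c := by
      rcases hfc2Z with h | h
      · exact h
      · exact absurd (hinj (h.trans hfc.symm)).symm hcc2
    have v1 : f (c * b) = c ^ 2 * b ^ 2 :=
      getval b c 2 2 (by norm_num) (by norm_num) hfb hfc _ m1 m2
    have v2 : f (c * b ^ 2) = c ^ 2 * b ^ 1 :=
      getval (b ^ 2) c 2 1 (by norm_num) (by norm_num) (by rw [pow_one]; exact hfb2)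
        hfc _ m3 m4
    have v3 : f (c ^ 2 * b) = c ^ 1 * b ^ 2 :=
      getval b (c ^ 2) 1 2 (by norm_num) (by norm_num) hfb
        (by rw [pow_one]; exact hfc2) _ m5 m6
    have v4 : f (c ^ 2 * b ^ 2) = c ^ 1 * b ^ 1 :=
      getval (b ^ 2) (c ^ 2) 1 1 (by norm_num) (by norm_num) (by rw [pow_one]; exact hfb2)
        (by rw [pow_one]; exact hfc2) _ m7 m8
    right; right; right
    exact ⟨hf1, hfb, hfb2, hfc, hfc2, v1, by simpa using v4, by simpa using v2,
      by simpa using v3⟩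
end
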